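/- arXiv:2503.09571 — 10 statements merged into one kernel-verified Lean document; each statement's English description precedes it below -/
import Mathlib

section
/- Fix integers n ≥ 1, m ≥ 2 and r ≥ 0, and a signed matroid (P,σ) of rank two on {1,…,n} with m parts. The kinematic stratum M⁰_{P,σ,r} is nonempty if and only if either (3 ≤ r and r ≤ m) or (r = 2 and m = 2). -/
open Matrix

/-- The kinematic stratum `M⁰_{P,σ,r}`: real symmetric `n × n` matrices `S` with zero
diagonal, at most one positive eigenvalue, rank `r`, and off-diagonal sign pattern
governed by the signed matroid `(P, σ)` (encoded by `part : Fin n → Option (Fin m)`). -/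
def kinematicStratum (n m : ℕ) (part : Fin n → Option (Fin m)) (σ : Fin n → ℝ) (r : ℕ) :
    Set (Matrix (Fin n) (Fin n) ℝ) :=
  {S | ∃ hS : S.IsHermitian,
    (∀ i, S i i = 0) ∧
    Nat.card {i : Fin n // 0 < hS.eigenvalues i} ≤ 1 ∧
    S.rank = r ∧
    ∀ i j : Fin n, i ≠ j →
      ((part i ≠ none ∧ part j ≠ none ∧ part i ≠ part j) → 0 < S i j * σ i * σ j) ∧
      (¬(part i ≠ none ∧ part j ≠ none ∧ part i ≠ part j) → S i j = 0)}

section AuxKinematic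

variable {n : ℕ}


lemma vecMulVec_mulVec_eq (u x : Fin n → ℝ) :
    vecMulVec u u *ᵥ x = (u ⬝ᵥ x) • u := by
  funext i
  simp only [mulVec, vecMulVec_apply, dotProduct, Pi.smul_apply, smul_eq_mul, Finset.sum_mul]
  exact Finset.sum_congr rfl fun j _ => by ring

lemma dot_vecMulVec (u x : Fin n → ℝ) :
    x ⬝ᵥ (vecMulVec u u *ᵥ x) = (u ⬝ᵥ x)^2 := by
  rw [vecMulVec_mulVec_eq, dotProduct_smul, smul_eq_mul, dotProduct_comm, pow_two]

lemma star_pi_real (x : Fin n → ℝ) : star x = x := funext fun i => star_trivial _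

lemma eigenbasis_dot {S : Matrix (Fin n) (Fin n) ℝ} (hS : S.IsHermitian) (i j : Fin n) :
    (⇑(hS.eigenvectorBasis i) : Fin n → ℝ) ⬝ᵥ ⇑(hS.eigenvectorBasis j)
      = if i = j then 1 else 0 := by
  have h := orthonormal_iff_ite.mp hS.eigenvectorBasis.orthonormal i j
  rw [EuclideanSpace.inner_eq_star_dotProduct] at h
  rw [dotProduct_comm]
  simpa [star_pi_real] using h

lemma quad_expand {S : Matrix (Fin n) (Fin n) ℝ} (hS : S.IsHermitian) (x : Fin n → ℝ) :
    x ⬝ᵥ (S *ᵥ x) = ∑ k, hS.eigenvalues k *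
      ((⇑(hS.eigenvectorBasis k) : Fin n → ℝ) ⬝ᵥ x)^2 := by
  classical
  set U : Matrix (Fin n) (Fin n) ℝ := (hS.eigenvectorUnitary : Matrix (Fin n) (Fin n) ℝ) with hU
  have hstar : star U = Uᵀ := by
    rw [star_eq_conjTranspose]
    ext i j
    simp [conjTranspose_apply]
  have hz : ∀ k, (star U *ᵥ x) k = (⇑(hS.eigenvectorBasis k) : Fin n → ℝ) ⬝ᵥ x := by
    intro k
    rw [hstar]
    simp only [mulVec, transpose_apply, dotProduct]
    exact Finset.sum_congr rfl fun i _ => by rw [hU]; simp [Matrix.IsHermitian.eigenvectorUnitary_apply]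
  conv_lhs => rw [hS.spectral_theorem, Unitary.conjStarAlgAut_apply]
  rw [← hU]
  have hdiag : diagonal (RCLike.ofReal ∘ hS.eigenvalues) = diagonal hS.eigenvalues := by
    congr 1
  rw [hdiag, ← mulVec_mulVec, ← mulVec_mulVec, dotProduct_mulVec]
  have hxU : x ᵥ* U = star U *ᵥ x := by rw [hstar, mulVec_transpose]
  rw [hxU]
  have hzz : (star U *ᵥ x) ⬝ᵥ (diagonal hS.eigenvalues *ᵥ (star U *ᵥ x))
      = ∑ k, hS.eigenvalues k * ((star U *ᵥ x) k)^2 := by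
    simp only [dotProduct, mulVec_diagonal]
    exact Finset.sum_congr rfl fun k _ => by ring
  rw [hzz]
  exact Finset.sum_congr rfl fun k _ => by rw [hz k]

lemma card_le_one_of_cert {S : Matrix (Fin n) (Fin n) ℝ} (hS : S.IsHermitian)
    (u : Fin n → ℝ) (hu : ∀ x, x ⬝ᵥ (S *ᵥ x) ≤ (u ⬝ᵥ x)^2) :
    Nat.card {i : Fin n // 0 < hS.eigenvalues i} ≤ 1 := by
  classical
  rw [Nat.card_eq_fintype_card, Fintype.card_le_one_iff_subsingleton]
  constructor
  rintro ⟨a, ha⟩ ⟨b, hb⟩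
  by_contra hab
  have hab' : a ≠ b := fun h => hab (Subtype.ext h)
  set va : Fin n → ℝ := ⇑(hS.eigenvectorBasis a) with hva
  set vb : Fin n → ℝ := ⇑(hS.eigenvectorBasis b) with hvb
  have hSa : S *ᵥ va = hS.eigenvalues a • va := hS.mulVec_eigenvectorBasis a
  have hSb : S *ᵥ vb = hS.eigenvalues b • vb := hS.mulVec_eigenvectorBasis b
  have haa : va ⬝ᵥ va = 1 := by simpa using eigenbasis_dot hS a a
  have hbb : vb ⬝ᵥ vb = 1 := by simpa using eigenbasis_dot hS b b
  have hab2 : va ⬝ᵥ vb = 0 := by simpa [hab'] using eigenbasis_dot hS a b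
  have hba2 : vb ⬝ᵥ va = 0 := by simpa [hab'.symm] using eigenbasis_dot hS b a
  by_cases hα : u ⬝ᵥ va = 0
  · have h1 := hu va
    rw [hSa, dotProduct_smul, smul_eq_mul, haa, hα] at h1
    nlinarith
  · set x := (u ⬝ᵥ vb) • va - (u ⬝ᵥ va) • vb with hx
    have hux : u ⬝ᵥ x = 0 := by
      rw [hx, dotProduct_sub, dotProduct_smul, dotProduct_smul]
      simp [mul_comm]
    have hSx : S *ᵥ x = (u ⬝ᵥ vb) • (hS.eigenvalues a • va)
        - (u ⬝ᵥ va) • (hS.eigenvalues b • vb) := by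
      rw [hx, mulVec_sub, mulVec_smul, mulVec_smul, hSa, hSb]
    have hq : x ⬝ᵥ (S *ᵥ x) = (u ⬝ᵥ vb)^2 * hS.eigenvalues a
        + (u ⬝ᵥ va)^2 * hS.eigenvalues b := by
      rw [hSx, hx]
      simp only [dotProduct_sub, sub_dotProduct, dotProduct_smul, smul_dotProduct,
        smul_eq_mul, haa, hbb, hab2, hba2]
      ring
    have h2 := hu x
    rw [hq, hux] at h2
    have h3 : 0 < (u ⬝ᵥ va)^2 := by positivity
    nlinarith [sq_nonneg (u ⬝ᵥ vb)]

lemma exists_cert {S : Matrix (Fin n) (Fin n) ℝ} (hS : S.IsHermitian)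
    (hcard : Nat.card {i : Fin n // 0 < hS.eigenvalues i} ≤ 1) :
    ∃ u : Fin n → ℝ, ∀ x, x ⬝ᵥ (S *ᵥ x) ≤ (u ⬝ᵥ x)^2 := by
  classical
  by_cases hp : ∃ p, 0 < hS.eigenvalues p
  · obtain ⟨p, hp⟩ := hp
    have hle : ∀ k, k ≠ p → hS.eigenvalues k ≤ 0 := by
      intro k hk
      by_contra h
      push_neg at h
      have hnt : Nontrivial {i : Fin n // 0 < hS.eigenvalues i} :=
        ⟨⟨⟨k, h⟩, ⟨p, hp⟩, by simp [Subtype.ext_iff, hk]⟩⟩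
      rw [Nat.card_eq_fintype_card] at hcard
      have := Fintype.one_lt_card_iff_nontrivial.mpr hnt
      omega
    refine ⟨Real.sqrt (hS.eigenvalues p) • ⇑(hS.eigenvectorBasis p), fun x => ?_⟩
    rw [quad_expand hS x, smul_dotProduct, smul_eq_mul, mul_pow,
      Real.sq_sqrt hp.le]
    calc ∑ k, hS.eigenvalues k * ((⇑(hS.eigenvectorBasis k) : Fin n → ℝ) ⬝ᵥ x)^2
        ≤ ∑ k, (if k = p then hS.eigenvalues p *
            ((⇑(hS.eigenvectorBasis p) : Fin n → ℝ) ⬝ᵥ x)^2 else 0) := by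
          refine Finset.sum_le_sum fun k _ => ?_
          rcases eq_or_ne k p with rfl | hk
          · simp
          · simp only [hk, if_false]
            exact mul_nonpos_of_nonpos_of_nonneg (hle k hk) (sq_nonneg _)
      _ = hS.eigenvalues p * ((⇑(hS.eigenvectorBasis p) : Fin n → ℝ) ⬝ᵥ x)^2 := by
          simp
  · push_neg at hp
    refine ⟨0, fun x => ?_⟩
    rw [quad_expand hS x]
    simp only [zero_dotProduct]
    calc ∑ k, hS.eigenvalues k * ((⇑(hS.eigenvectorBasis k) : Fin n → ℝ) ⬝ᵥ x)^2
        ≤ 0 := Finset.sum_nonpos fun k _ =>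
            mul_nonpos_of_nonpos_of_nonneg (hp k) (sq_nonneg _)
      _ = (0:ℝ)^2 := by norm_num

lemma rank_submatrix_le'' {k n : ℕ} (A : Matrix (Fin n) (Fin n) ℝ) (f g : Fin k → Fin n) :
    (A.submatrix f g).rank ≤ A.rank := by
  classical
  have h : A.submatrix f g =
      (Matrix.of fun p c => if c = f p then (1:ℝ) else 0 : Matrix (Fin k) (Fin n) ℝ) * A *
      (Matrix.of fun c q => if c = g q then (1:ℝ) else 0 : Matrix (Fin n) (Fin k) ℝ) := by
    ext p q
    simp only [mul_apply, submatrix_apply, of_apply, ite_mul, one_mul, zero_mul, mul_ite,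
      mul_one, mul_zero]
    simp [Finset.sum_ite_eq']
  rw [h]
  exact le_trans (Matrix.rank_mul_le_left _ _) (Matrix.rank_mul_le_right _ _)

lemma construction {n m d : ℕ} (part : Fin n → Option (Fin m))
    (hpart : ∀ μ : Fin m, ∃ i, part i = some μ)
    (σ : Fin n → ℝ) (hσ : ∀ i, σ i = 1 ∨ σ i = -1)
    (c : Fin m → Fin d → ℝ)
    (hunit : ∀ μ, c μ ⬝ᵥ c μ = 1)
    (hlt : ∀ μ ν, μ ≠ ν → c μ ⬝ᵥ c ν < 1)
    (hspan : Submodule.span ℝ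
        (Set.range (fun μ => Sum.elim (fun _ : Unit => (1:ℝ)) (c μ))) = ⊤) :
    (kinematicStratum n m part σ (d+1)).Nonempty := by
  classical
  have hσsq : ∀ i, σ i * σ i = 1 := by
    intro i; rcases hσ i with h | h <;> rw [h] <;> norm_num
  set u : Fin n → ℝ := fun i => (part i).elim 0 (fun _ => σ i) with hu_def
  set cv : Fin n → Fin d → ℝ := fun i => (part i).elim 0 c with hcv_def
  have hu_some : ∀ i μ, part i = some μ → u i = σ i := by
    intro i μ h; simp [hu_def, h]
  have hcv_some : ∀ i μ, part i = some μ → cv i = c μ := by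
    intro i μ h; simp [hcv_def, h]
  have hu_none : ∀ i, part i = none → u i = 0 := by
    intro i h; simp [hu_def, h]
  set N : Matrix (Fin d) (Fin n) ℝ := Matrix.of (fun k i => u i * cv i k) with hN
  set S : Matrix (Fin n) (Fin n) ℝ := vecMulVec u u - Nᵀ * N with hS_def
  have hSentry : ∀ i j, S i j = u i * u j * (1 - cv i ⬝ᵥ cv j) := by
    intro i j
    simp only [hS_def, Matrix.sub_apply, vecMulVec_apply, mul_apply, transpose_apply, hN, of_apply,
      dotProduct]
    have : ∑ k, (u i * cv i k) * (u j * cv j k) = u i * u j * ∑ k, cv i k * cv j k := by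
      rw [Finset.mul_sum]
      exact Finset.sum_congr rfl fun k _ => by ring
    rw [this]
    ring
  have hherm : S.IsHermitian := by
    have : Sᵀ = S := by
      ext i j
      rw [transpose_apply, hSentry, hSentry, dotProduct_comm]
      ring
    ext i j
    rw [conjTranspose_apply, star_trivial]
    exact congrFun (congrFun this i) j
  have hmv : ∀ x, S *ᵥ x = (u ⬝ᵥ x) • u - Nᵀ *ᵥ (N *ᵥ x) := by
    intro x
    rw [hS_def, sub_mulVec, vecMulVec_mulVec_eq, mulVec_mulVec]
  have hcert : ∀ x, x ⬝ᵥ (S *ᵥ x) ≤ (u ⬝ᵥ x)^2 := by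
    intro x
    rw [hmv x, dotProduct_sub, dotProduct_smul, smul_eq_mul, dotProduct_comm x u]
    have h1 : x ⬝ᵥ (Nᵀ *ᵥ (N *ᵥ x)) = (N *ᵥ x) ⬝ᵥ (N *ᵥ x) := by
      rw [dotProduct_mulVec, vecMul_transpose]
    have h2 : 0 ≤ (N *ᵥ x) ⬝ᵥ (N *ᵥ x) := Finset.sum_nonneg fun k _ => mul_self_nonneg _
    rw [h1]
    nlinarith [sq_nonneg (u ⬝ᵥ x)]
  -- the tall matrix
  set W : Matrix (Unit ⊕ Fin d) (Fin n) ℝ :=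
    Matrix.of (fun k i => Sum.elim (fun _ : Unit => u i) (fun j => N j i) k) with hW
  have hWcol : ∀ i μ, part i = some μ →
      (fun k => W k i) = σ i • Sum.elim (fun _ : Unit => (1:ℝ)) (c μ) := by
    intro i μ h
    funext k
    rcases k with _ | j
    · simp [hW, hu_some i μ h]
    · simp [hW, hN, hu_some i μ h, hcv_some i μ h]
  have hWcol0 : ∀ i, part i = none → (fun k => W k i) = 0 := by
    intro i h
    funext k
    rcases k with _ | j
    · simp [hW, hu_none i h]
    · simp [hW, hN, hu_none i h]
  have hWspan : Submodule.span ℝ (Set.range Wᵀ) = ⊤ := by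
    rw [eq_top_iff, ← hspan]
    refine Submodule.span_le.mpr ?_
    rintro _ ⟨μ, rfl⟩
    obtain ⟨i, hi⟩ := hpart μ
    have heq : Sum.elim (fun _ : Unit => (1:ℝ)) (c μ) = σ i • (fun k => W k i) := by
      rw [hWcol i μ hi, smul_smul, hσsq i, one_smul]
    show Sum.elim (fun _ : Unit => (1:ℝ)) (c μ) ∈ _
    rw [heq]
    refine Submodule.smul_mem _ _ (Submodule.subset_span ⟨i, ?_⟩)
    funext k
    rfl
  have hker : ∀ x, S *ᵥ x = 0 ↔ W *ᵥ x = 0 := by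
    intro x
    constructor
    · intro hx
      set y : Unit ⊕ Fin d → ℝ :=
        Sum.elim (fun _ : Unit => u ⬝ᵥ x) (fun j => -((N *ᵥ x) j)) with hy
      have hWty : Wᵀ *ᵥ y = 0 := by
        funext i
        have h1 : (Wᵀ *ᵥ y) i = (S *ᵥ x) i := by
          rw [hmv x]
          simp only [mulVec, dotProduct, transpose_apply, hW, of_apply, hy,
            Fintype.sum_sum_type, Sum.elim_inl, Sum.elim_inr, Pi.sub_apply, Pi.smul_apply,
            smul_eq_mul, Finset.univ_unique, Finset.sum_singleton, mul_neg]
          rw [Finset.sum_neg_distrib, ← sub_eq_add_neg, mul_comm]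
        rw [h1, hx]
      have hally : ∀ w : Unit ⊕ Fin d → ℝ, y ⬝ᵥ w = 0 := by
        intro w
        have hw : w ∈ Submodule.span ℝ (Set.range Wᵀ) := by rw [hWspan]; trivial
        induction hw using Submodule.span_induction with
        | mem w hwmem =>
          obtain ⟨i, rfl⟩ := hwmem
          have := congrFun hWty i
          simpa [mulVec, dotProduct, transpose_apply, mul_comm] using this
        | zero => simp
        | add w1 w2 _ _ h1 h2 => rw [dotProduct_add, h1, h2, add_zero]
        | smul a w1 _ h1 => rw [dotProduct_smul, h1, smul_zero]
      have hyk : ∀ k, y k = 0 := by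
        intro k
        have := hally (Pi.single k 1)
        rwa [dotProduct_single, mul_one] at this
      funext k
      rcases k with _ | j
      · have := hyk (Sum.inl ())
        simp only [hy, Sum.elim_inl] at this
        simpa [hW, mulVec, dotProduct] using this
      · have := hyk (Sum.inr j)
        simp only [hy, Sum.elim_inr, neg_eq_zero] at this
        simpa [hW, mulVec, dotProduct] using this
    · intro hx
      rw [hmv x]
      have h1 : u ⬝ᵥ x = 0 := by
        have := congrFun hx (Sum.inl ())
        simpa [hW, mulVec, dotProduct] using this
      have h2 : N *ᵥ x = 0 := by
        funext j
        have := congrFun hx (Sum.inr j)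
        simpa [hW, mulVec, dotProduct] using this
      rw [h1, h2, zero_smul, mulVec_zero, sub_zero]
  have hrank : S.rank = d + 1 := by
    have hker_eq : LinearMap.ker S.mulVecLin = LinearMap.ker W.mulVecLin := by
      ext x
      simp only [LinearMap.mem_ker, mulVecLin_apply]
      exact hker x
    have h1 := LinearMap.finrank_range_add_finrank_ker S.mulVecLin
    have h2 := LinearMap.finrank_range_add_finrank_ker W.mulVecLin
    rw [hker_eq] at h1
    have hrW : Module.finrank ℝ (LinearMap.range W.mulVecLin) = d + 1 := by
      rw [Matrix.range_mulVecLin]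
      change Module.finrank ℝ (Submodule.span ℝ (Set.range Wᵀ)) = d + 1
      rw [hWspan, finrank_top, Module.finrank_fintype_fun_eq_card]
      simp only [Fintype.card_sum, Fintype.card_unit, Fintype.card_fin]
      omega
    have hrS : S.rank = Module.finrank ℝ (LinearMap.range S.mulVecLin) := rfl
    rw [Module.finrank_fintype_fun_eq_card, Fintype.card_fin] at h1 h2
    rw [hrW] at h2
    omega
  refine ⟨S, hherm, ?_, card_le_one_of_cert hherm u hcert, hrank, ?_⟩
  · intro i
    rcases hp : part i with _ | μ
    · rw [hSentry, hu_none i hp]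
      ring
    · rw [hSentry, hcv_some i μ hp, hunit μ]
      ring
  · intro i j hij
    constructor
    · rintro ⟨hi, hj, hne⟩
      obtain ⟨μ, hμ⟩ := Option.ne_none_iff_exists'.mp hi
      obtain ⟨ν, hν⟩ := Option.ne_none_iff_exists'.mp hj
      have hμν : μ ≠ ν := by
        rintro rfl
        exact hne (hμ.trans hν.symm)
      have hd : (0:ℝ) < 1 - c μ ⬝ᵥ c ν := by linarith [hlt μ ν hμν]
      have heq : S i j * σ i * σ j = (σ i * σ i) * (σ j * σ j) * (1 - c μ ⬝ᵥ c ν) := by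
        rw [hSentry, hu_some i μ hμ, hu_some j ν hν, hcv_some i μ hμ, hcv_some j ν hν]
        ring
      rw [heq, hσsq i, hσsq j, one_mul, one_mul]
      exact hd
    · intro hnot
      rcases hpi : part i with _ | μ
      · rw [hSentry, hu_none i hpi]
        ring
      rcases hpj : part j with _ | ν
      · rw [hSentry, hu_none j hpj]
        ring
      have hμν : μ = ν := by
        by_contra hc
        refine hnot ⟨by simp [hpi], by simp [hpj], ?_⟩
        rw [hpi, hpj]
        intro h
        exact hc (Option.some_injective _ h)
      subst hμν
      rw [hSentry, hcv_some i μ hpi, hcv_some j μ hpj, hunit μ]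
      ring

noncomputable def c2 : Fin 2 → Fin 1 → ℝ := fun μ _ => if μ = 0 then 1 else -1

lemma c2_unit : ∀ μ, c2 μ ⬝ᵥ c2 μ = 1 := by
  intro μ
  fin_cases μ <;> simp [c2, dotProduct]

lemma c2_lt : ∀ μ ν, μ ≠ ν → c2 μ ⬝ᵥ c2 ν < 1 := by
  intro μ ν h
  fin_cases μ <;> fin_cases ν <;> simp_all [c2, dotProduct] <;> norm_num

lemma c2_span : Submodule.span ℝ
    (Set.range (fun μ => Sum.elim (fun _ : Unit => (1:ℝ)) (c2 μ))) = ⊤ := by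
  rw [eq_top_iff]
  rintro x -
  have hx : x = ((x (Sum.inl ()) + x (Sum.inr 0))/2) • Sum.elim (fun _ : Unit => (1:ℝ)) (c2 0)
      + ((x (Sum.inl ()) - x (Sum.inr 0))/2) • Sum.elim (fun _ : Unit => (1:ℝ)) (c2 1) := by
    funext k
    rcases k with _ | j
    · simp [c2]
      ring
    · have : j = 0 := Subsingleton.elim _ _
      subst this
      simp [c2]
      ring
  rw [hx]
  exact Submodule.add_mem _
    (Submodule.smul_mem _ _ (Submodule.subset_span ⟨0, rfl⟩))
    (Submodule.smul_mem _ _ (Submodule.subset_span ⟨1, rfl⟩))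

lemma general_vectors {m d : ℕ} (hd : 2 ≤ d) (hdm : d < m) :
    ∃ c : Fin m → Fin d → ℝ,
      (∀ μ, c μ ⬝ᵥ c μ = 1) ∧ (∀ μ ν, μ ≠ ν → c μ ⬝ᵥ c ν < 1) ∧
      Submodule.span ℝ
        (Set.range (fun μ => Sum.elim (fun _ : Unit => (1:ℝ)) (c μ))) = ⊤ := by
  classical
  set s : Fin m → ℝ := fun μ => -(2 + (μ:ℕ) : ℝ) with hs_def
  set A : Fin m → ℝ := fun μ => (1 - s μ^2) / (1 + s μ^2) with hA_def
  set B : Fin m → ℝ := fun μ => (2 * s μ) / (1 + s μ^2) with hB_def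
  have hi0 : 0 < d := by omega
  have hi1 : 1 < d := by omega
  set i0 : Fin d := ⟨0, hi0⟩ with hi0_def
  set i1 : Fin d := ⟨1, hi1⟩ with hi1_def
  have hi01 : i0 ≠ i1 := by simp [hi0_def, hi1_def, Fin.ext_iff]
  have hsle : ∀ μ, s μ ≤ -2 := by
    intro μ
    simp only [hs_def]
    have : (0:ℝ) ≤ (μ:ℕ) := Nat.cast_nonneg _
    linarith
  have hden : ∀ μ, (0:ℝ) < 1 + s μ^2 := by intro μ; positivity
  have hAneg : ∀ μ, A μ < 0 := by
    intro μ
    apply div_neg_of_neg_of_pos _ (hden μ)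
    nlinarith [hsle μ]
  have hBneg : ∀ μ, B μ < 0 := by
    intro μ
    apply div_neg_of_neg_of_pos _ (hden μ)
    nlinarith [hsle μ]
  have hsinj : ∀ μ ν : Fin m, μ ≠ ν → s μ ≠ s ν := by
    intro μ ν h hc
    simp only [hs_def, neg_inj, add_right_inj, Nat.cast_inj] at hc
    exact h (Fin.ext hc)
  set c : Fin m → Fin d → ℝ := fun μ =>
    if h : (μ:ℕ) < d then Pi.single (⟨(μ:ℕ), h⟩ : Fin d) 1
    else Pi.single i0 (A μ) + Pi.single i1 (B μ) with hc_def
  have hsingle_dot : ∀ (k l : Fin d) (p q : ℝ),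
      (Pi.single k p : Fin d → ℝ) ⬝ᵥ Pi.single l q = if k = l then p * q else 0 := by
    intro k l p q
    rw [single_dotProduct, Pi.single_apply]
    split_ifs with h
    · rfl
    · exact mul_zero p
  have hABunit : ∀ μ, A μ * A μ + B μ * B μ = 1 := by
    intro μ
    have h := (hden μ).ne'
    simp only [hA_def, hB_def]
    rw [div_mul_div_comm, div_mul_div_comm, ← add_div, div_eq_one_iff_eq (mul_ne_zero h h)]
    ring
  refine ⟨c, ?_, ?_, ?_⟩
  · intro μ
    by_cases h : (μ:ℕ) < d
    · simp only [hc_def, dif_pos h, hsingle_dot, if_pos rfl, mul_one]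
      simp
    · simp only [hc_def, dif_neg h, dotProduct_add, add_dotProduct, hsingle_dot,
        if_pos rfl, if_neg hi01, if_neg (Ne.symm hi01), add_zero, zero_add]
      exact hABunit μ
  · intro μ ν hne
    by_cases h1 : (μ:ℕ) < d <;> by_cases h2 : (ν:ℕ) < d
    · have : (⟨(μ:ℕ), h1⟩ : Fin d) ≠ ⟨(ν:ℕ), h2⟩ := by
        simp only [ne_eq, Fin.mk.injEq]
        intro hc
        exact hne (Fin.ext hc)
      simp only [hc_def, dif_pos h1, dif_pos h2, hsingle_dot, if_neg this]
      norm_num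
    · simp only [hc_def, dif_pos h1, dif_neg h2, dotProduct_add, hsingle_dot]
      have := hAneg ν
      have := hBneg ν
      split_ifs <;> linarith
    · simp only [hc_def, dif_neg h1, dif_pos h2, add_dotProduct, hsingle_dot]
      have := hAneg μ
      have := hBneg μ
      split_ifs <;> linarith
    · simp only [hc_def, dif_neg h1, dif_neg h2, dotProduct_add, add_dotProduct, hsingle_dot,
        if_pos rfl, if_neg hi01, if_neg (Ne.symm hi01), add_zero, zero_add]
      have hsq : 0 < (s μ - s ν)^2 :=
        lt_of_le_of_ne (sq_nonneg _) (Ne.symm (pow_ne_zero 2 (sub_ne_zero.mpr (hsinj μ ν hne))))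
      have e : A μ * A ν + B μ * B ν
          = ((1 - s μ^2) * (1 - s ν^2) + (2 * s μ) * (2 * s ν)) / ((1 + s μ^2) * (1 + s ν^2)) := by
        rw [hA_def, hB_def]
        rw [div_mul_div_comm, div_mul_div_comm, ← add_div]
      have e2 : ((if True then A μ * A ν else 0) + if True then B μ * B ν else 0)
          = A μ * A ν + B μ * B ν := by simp
      rw [e2, e, div_lt_one (by positivity)]
      nlinarith [hsq]
  · rw [eq_top_iff]
    rintro x -
    set v : Fin m → (Unit ⊕ Fin d → ℝ) :=
      fun μ => Sum.elim (fun _ : Unit => (1:ℝ)) (c μ) with hv_def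
    have hvmem : ∀ μ, v μ ∈ Submodule.span ℝ (Set.range v) :=
      fun μ => Submodule.subset_span ⟨μ, rfl⟩
    set w0 : Unit ⊕ Fin d → ℝ := Sum.elim (fun _ : Unit => (1:ℝ)) 0 with hw0_def
    have h0m : 0 < m := by omega
    have h1m : 1 < m := by omega
    set μs : Fin m := ⟨d, hdm⟩ with hμs_def
    have hμsd : ¬ ((μs:ℕ) < d) := by simp [hμs_def]
    have hcμs : c μs = Pi.single i0 (A μs) + Pi.single i1 (B μs) := by
      simp only [hc_def]
      rw [dif_neg hμsd]
    have hcj : ∀ (j : ℕ) (hj : j < d), c ⟨j, lt_trans hj hdm⟩ = Pi.single (⟨j, hj⟩ : Fin d) 1 := by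
      intro j hj
      simp only [hc_def]
      rw [dif_pos]
      exact hj
    have ht : v μs - A μs • v ⟨0, h0m⟩ - B μs • v ⟨1, h1m⟩ = (1 - A μs - B μs) • w0 := by
      funext k
      rcases k with _ | j
      · simp [hv_def, hw0_def]
      · have e0 : c ⟨0, h0m⟩ = Pi.single (⟨0, hi0⟩ : Fin d) 1 := hcj 0 hi0
        have e1 : c ⟨1, h1m⟩ = Pi.single (⟨1, hi1⟩ : Fin d) 1 := hcj 1 hi1
        simp only [hv_def, hw0_def, Pi.sub_apply, Pi.smul_apply, Sum.elim_inr, smul_eq_mul,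
          hcμs, e0, e1, Pi.add_apply, Pi.zero_apply, mul_zero]
        rw [Pi.single_apply, Pi.single_apply, Pi.single_apply, Pi.single_apply]
        split_ifs <;> ring
    have hscal : (0:ℝ) < 1 - A μs - B μs := by
      have := hAneg μs
      have := hBneg μs
      linarith
    have hw0mem : w0 ∈ Submodule.span ℝ (Set.range v) := by
      have : w0 = (1 - A μs - B μs)⁻¹ • (v μs - A μs • v ⟨0, h0m⟩ - B μs • v ⟨1, h1m⟩) := by
        rw [ht, smul_smul, inv_mul_cancel₀ hscal.ne', one_smul]
      rw [this]
      exact Submodule.smul_mem _ _ (Submodule.sub_mem _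
        (Submodule.sub_mem _ (hvmem μs) (Submodule.smul_mem _ _ (hvmem _)))
        (Submodule.smul_mem _ _ (hvmem _)))
    have hwjmem : ∀ j : Fin d,
        (Sum.elim (fun _ : Unit => (0:ℝ)) (Pi.single j 1) : Unit ⊕ Fin d → ℝ)
          ∈ Submodule.span ℝ (Set.range v) := by
      intro j
      have hjd : (j:ℕ) < d := j.2
      have : (Sum.elim (fun _ : Unit => (0:ℝ)) (Pi.single j 1) : Unit ⊕ Fin d → ℝ)
          = v ⟨(j:ℕ), lt_trans hjd hdm⟩ - w0 := by
        funext k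
        rcases k with _ | l
        · simp [hv_def, hw0_def]
        · simp only [hv_def, hw0_def, Sum.elim_inr, Pi.sub_apply, Pi.zero_apply, hcj (j:ℕ) hjd]
          simp
      rw [this]
      exact Submodule.sub_mem _ (hvmem _) hw0mem
    have hx : x = x (Sum.inl ()) • w0
        + ∑ j : Fin d, x (Sum.inr j) • Sum.elim (fun _ : Unit => (0:ℝ)) (Pi.single j 1) := by
      funext k
      rcases k with _ | l
      · simp [hw0_def, Finset.sum_apply]
      · simp only [Pi.add_apply, Pi.smul_apply, hw0_def, Sum.elim_inl, Sum.elim_inr,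
          smul_eq_mul, mul_zero, mul_one, Finset.sum_apply, Pi.single_apply]
        simp [Finset.sum_ite_eq]
    rw [hx]
    exact Submodule.add_mem _ (Submodule.smul_mem _ _ hw0mem)
      (Submodule.sum_mem _ fun j _ => Submodule.smul_mem _ _ (hwjmem j))

lemma necessity {n m r : ℕ} (hm : 2 ≤ m)
    (part : Fin n → Option (Fin m)) (hpart : ∀ μ : Fin m, ∃ i, part i = some μ)
    (σ : Fin n → ℝ) {S : Matrix (Fin n) (Fin n) ℝ}
    (hmem : S ∈ kinematicStratum n m part σ r) :
    2 ≤ r ∧ r ≤ m ∧ (3 ≤ m → 3 ≤ r) := by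
  classical
  obtain ⟨hS, hdiag, hcard, hrank, hsign⟩ := hmem
  have hsym : ∀ i j, S j i = S i j := by
    intro i j
    have := hS.apply i j
    rwa [star_trivial] at this
  have hne0 : ∀ i j μ ν, part i = some μ → part j = some ν → μ ≠ ν → S i j ≠ 0 := by
    intro i j μ ν hμ hν hμν
    have hij : i ≠ j := by
      rintro rfl
      rw [hμ] at hν
      exact hμν (Option.some_injective _ hν)
    have hcond : part i ≠ none ∧ part j ≠ none ∧ part i ≠ part j := by
      refine ⟨by simp [hμ], by simp [hν], ?_⟩
      rw [hμ, hν]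
      intro h
      exact hμν (Option.some_injective _ h)
    have := (hsign i j hij).1 hcond
    intro h0
    rw [h0] at this
    simp at this
  -- lower bound 2
  have hr2 : 2 ≤ r := by
    obtain ⟨i0, hi0⟩ := hpart ⟨0, by omega⟩
    obtain ⟨i1, hi1⟩ := hpart ⟨1, by omega⟩
    have hμν : (⟨0, by omega⟩ : Fin m) ≠ ⟨1, by omega⟩ := by simp [Fin.ext_iff]
    have hij : i0 ≠ i1 := by
      rintro rfl
      rw [hi0] at hi1
      exact hμν (Option.some_injective _ hi1)
    set B := S.submatrix ![i0, i1] ![i0, i1] with hB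
    have hdet : B.det ≠ 0 := by
      rw [Matrix.det_fin_two]
      simp only [hB, submatrix_apply]
      simp only [Matrix.cons_val_zero, Matrix.cons_val_one, Matrix.head_cons]
      rw [hdiag i0, hdiag i1, zero_mul, zero_sub, neg_ne_zero]
      exact mul_ne_zero (hne0 i0 i1 _ _ hi0 hi1 hμν) (hne0 i1 i0 _ _ hi1 hi0 hμν.symm)
    have hBrank : B.rank = 2 := by
      rw [Matrix.rank_of_isUnit B ((Matrix.isUnit_iff_isUnit_det B).mpr (isUnit_iff_ne_zero.mpr hdet))]
      simp
    have := rank_submatrix_le'' S ![i0, i1] ![i0, i1]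
    rw [← hB, hBrank, hrank] at this
    exact this
  -- lower bound 3 when 3 ≤ m
  have hr3 : 3 ≤ m → 3 ≤ r := by
    intro h3
    obtain ⟨i0, hi0⟩ := hpart ⟨0, by omega⟩
    obtain ⟨i1, hi1⟩ := hpart ⟨1, by omega⟩
    obtain ⟨i2, hi2⟩ := hpart ⟨2, by omega⟩
    have h01 : (⟨0, by omega⟩ : Fin m) ≠ ⟨1, by omega⟩ := by simp [Fin.ext_iff]
    have h02 : (⟨0, by omega⟩ : Fin m) ≠ ⟨2, by omega⟩ := by simp [Fin.ext_iff]
    have h12 : (⟨1, by omega⟩ : Fin m) ≠ ⟨2, by omega⟩ := by simp [Fin.ext_iff]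
    set B := S.submatrix ![i0, i1, i2] ![i0, i1, i2] with hB
    have hdet : B.det ≠ 0 := by
      rw [Matrix.det_fin_three]
      simp only [hB, submatrix_apply]
      simp only [Matrix.cons_val_zero, Matrix.cons_val_one, Matrix.head_cons,
        Matrix.cons_val_two, Matrix.tail_cons, Matrix.head_fin_const]
      rw [hdiag i0, hdiag i1, hdiag i2]
      rw [hsym i0 i1, hsym i0 i2, hsym i1 i2]
      have e1 := hne0 i0 i1 _ _ hi0 hi1 h01
      have e2 := hne0 i0 i2 _ _ hi0 hi2 h02
      have e3 := hne0 i1 i2 _ _ hi1 hi2 h12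
      intro hc
      have h2 : S i0 i1 * S i0 i2 * S i1 i2 = 0 := by linear_combination hc / 2
      exact (mul_ne_zero (mul_ne_zero e1 e2) e3) h2
    have hBrank : B.rank = 3 := by
      rw [Matrix.rank_of_isUnit B ((Matrix.isUnit_iff_isUnit_det B).mpr (isUnit_iff_ne_zero.mpr hdet))]
      simp
    have := rank_submatrix_le'' S ![i0, i1, i2] ![i0, i1, i2]
    rw [← hB, hBrank, hrank] at this
    exact this
  -- upper bound
  have hrm : r ≤ m := by
    obtain ⟨u, hu⟩ := exists_cert hS hcard
    set Q : Matrix (Fin n) (Fin n) ℝ := vecMulVec u u - S with hQ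
    have hQherm : Q.IsHermitian := by
      ext i j
      rw [conjTranspose_apply, star_trivial]
      simp only [hQ, Matrix.sub_apply, vecMulVec_apply]
      rw [hsym i j]
      ring
    have hQpsd : Q.PosSemidef := by
      refine PosSemidef.of_dotProduct_mulVec_nonneg hQherm fun x => ?_
      rw [star_pi_real]
      rw [hQ, sub_mulVec, dotProduct_sub, dot_vecMulVec]
      have := hu x
      linarith
    have key : ∀ (μ : Fin m) (x : Fin n → ℝ),
        (∀ j, x j ≠ 0 → part j = some μ) → u ⬝ᵥ x = 0 → S *ᵥ x = 0 := by
      intro μ x hsupp hux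
      have hxs : x ⬝ᵥ (S *ᵥ x) = 0 := by
        simp only [dotProduct, mulVec]
        refine Finset.sum_eq_zero fun i _ => ?_
        rcases eq_or_ne (x i) 0 with h | h
        · rw [h, zero_mul]
        · have : (∑ j, S i j * x j) = 0 := by
            refine Finset.sum_eq_zero fun j _ => ?_
            rcases eq_or_ne (x j) 0 with h2 | h2
            · rw [h2, mul_zero]
            · rcases eq_or_ne i j with rfl | hij
              · rw [hdiag i, zero_mul]
              · rw [(hsign i j hij).2, zero_mul]
                rintro ⟨-, -, hne⟩
                rw [hsupp i h, hsupp j h2] at hne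
                exact hne rfl
          rw [show (x i * ∑ j, S i j * x j) = x i * ∑ j, S i j * x j from rfl, this, mul_zero]
      have hq0 : x ⬝ᵥ (Q *ᵥ x) = 0 := by
        rw [hQ, sub_mulVec, dotProduct_sub, dot_vecMulVec, hux, hxs]
        norm_num
      have hQx : Q *ᵥ x = 0 := by
        have := (hQpsd.dotProduct_mulVec_zero_iff x).mp (by rw [star_pi_real]; exact hq0)
        exact this
      have : S *ᵥ x = vecMulVec u u *ᵥ x - Q *ᵥ x := by
        rw [hQ, sub_mulVec]
        abel
      rw [this, hQx, vecMulVec_mulVec_eq, hux, zero_smul, sub_zero]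
    set g : Fin m → (Fin n → ℝ) := fun μ =>
      if h : ∃ i, part i = some μ ∧ u i ≠ 0 then Sᵀ h.choose else 0 with hg
    have hcol : ∀ i, Sᵀ i ∈ Submodule.span ℝ (Set.range g) := by
      intro i
      rcases hp : part i with _ | μ
      · have : Sᵀ i = 0 := by
          funext j
          rw [transpose_apply]
          rcases eq_or_ne j i with rfl | hji
          · exact hdiag j
          · refine (hsign j i hji).2 ?_
            rintro ⟨-, h2, -⟩
            exact h2 hp
        rw [this]
        exact Submodule.zero_mem _
      · by_cases hw : ∃ i', part i' = some μ ∧ u i' ≠ 0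
        · obtain ⟨hp0, hu0⟩ := hw.choose_spec
          have hkey := key μ (Pi.single i (u hw.choose) - Pi.single hw.choose (u i)) ?_ ?_
          · have hST : ∀ j, S j i * u hw.choose - S j hw.choose * u i = 0 := by
              intro j
              have h1 := congrFun hkey j
              rw [mulVec_sub] at h1
              simp only [Pi.sub_apply, Pi.zero_apply] at h1
              rw [mulVec_single, mulVec_single] at h1
              exact h1
            have heq : Sᵀ i = (u i * (u hw.choose)⁻¹) • Sᵀ hw.choose := by
              funext j
              have h2 := hST j
              simp only [transpose_apply, Pi.smul_apply, smul_eq_mul]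
              field_simp
              linarith
            rw [heq]
            refine Submodule.smul_mem _ _ (Submodule.subset_span ⟨μ, ?_⟩)
            rw [hg]
            simp only [dif_pos hw]
          · intro j hj
            simp only [Pi.sub_apply, Pi.single_apply] at hj
            rcases eq_or_ne j i with rfl | h1
            · exact hp
            · rcases eq_or_ne j hw.choose with rfl | h2
              · exact hp0
              · exfalso
                apply hj
                rw [if_neg h1, if_neg h2]
                ring
          · rw [dotProduct_sub, dotProduct_single, dotProduct_single]
            ring
        · push_neg at hw
          have hui : u i = 0 := hw i hp
          have hkey := key μ (Pi.single i 1) ?_ ?_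
          · have : Sᵀ i = 0 := by
              funext j
              have h1 := congrFun hkey j
              rw [mulVec_single] at h1
              simp only [Pi.zero_apply, mul_one] at h1
              rw [transpose_apply]
              simpa using h1
            rw [this]
            exact Submodule.zero_mem _
          · intro j hj
            simp only [Pi.single_apply] at hj
            rcases eq_or_ne j i with rfl | h1
            · exact hp
            · simp [if_neg h1] at hj
          · rw [dotProduct_single, mul_one]
            exact hui
    have hrankle : S.rank ≤ m := by
      have h1 : S.rank = Module.finrank ℝ (LinearMap.range S.mulVecLin) := rfl
      rw [h1, Matrix.range_mulVecLin]
      have h2 : Submodule.span ℝ (Set.range Sᵀ) ≤ Submodule.span ℝ (Set.range g) := by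
        rw [Submodule.span_le]
        rintro _ ⟨i, rfl⟩
        exact hcol i
      refine le_trans (Submodule.finrank_mono h2) ?_
      refine le_trans (finrank_span_le_card _) ?_
      rw [Set.toFinset_range]
      exact le_trans (Finset.card_image_le) (by simp)
    rw [hrank] at hrankle
    exact hrankle
  exact ⟨hr2, hrm, hr3⟩

end AuxKinematic

/-- Theorem (nonemptiness of kinematic strata): for a signed matroid `(P, σ)` of rank two
on `{1,…,n}` with `m ≥ 2` parts, the stratum `M⁰_{P,σ,r}` is nonempty if and only if
`3 ≤ r ≤ m` or `r = m = 2`. -/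
theorem kinematicStratum_nonempty_iff (n m r : ℕ) (hn : 1 ≤ n) (hm : 2 ≤ m)
    (part : Fin n → Option (Fin m)) (hpart : ∀ μ : Fin m, ∃ i, part i = some μ)
    (σ : Fin n → ℝ) (hσ : ∀ i, σ i = 1 ∨ σ i = -1) :
    (kinematicStratum n m part σ r).Nonempty ↔ ((3 ≤ r ∧ r ≤ m) ∨ (r = 2 ∧ m = 2)) := by
  constructor
  · rintro ⟨S, hmemS⟩
    obtain ⟨hr2, hrm, hr3⟩ := necessity hm part hpart σ hmemS
    by_cases h3 : 3 ≤ m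
    · exact Or.inl ⟨hr3 h3, hrm⟩
    · exact Or.inr ⟨by omega, by omega⟩
  · rintro (⟨h3, hrm⟩ | ⟨hr2, hm2⟩)
    · have hd2 : 2 ≤ r - 1 := by omega
      have hdm : r - 1 < m := by omega
      obtain ⟨c, hc1, hc2, hc3⟩ := general_vectors hd2 hdm
      have := construction part hpart σ hσ c hc1 hc2 hc3
      rwa [show r - 1 + 1 = r by omega] at this
    · subst hr2
      subst hm2
      exact construction part hpart σ hσ c2 c2_unit c2_lt c2_span
end

section
/- Let S be a real symmetric n×n matrix. Then S has all diagonal entries nonnegative and at most one positive eigenvalue if and only if (−1)^{|I|−1}·det(S_I) ≥ 0 for every nonempty subset I ⊆ {1,…,n}, where S_I denotes the principal submatrix of S with rows and columns indexed by I. -/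
open Matrix Finset Filter Topology

section MandelstamAux

variable {n : ℕ}

lemma det_piecewise_rows (B : Matrix (Fin n) (Fin n) ℝ) (s : Finset (Fin n)) :
    Matrix.det (Matrix.of (s.piecewise (fun i => B i)
        (fun i => fun j => if i = j then (1:ℝ) else 0)))
      = (B.submatrix (fun i : s => (i : Fin n)) (fun j : s => (j : Fin n))).det := by
  classical
  set C : Matrix (Fin n) (Fin n) ℝ := Matrix.of (s.piecewise (fun i => B i)
        (fun i => fun j => if i = j then (1:ℝ) else 0)) with hC
  let e : {x // x ∈ s} ⊕ {x // x ∉ s} ≃ Fin n := Equiv.sumCompl (· ∈ s)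
  have h1 : C.submatrix e e =
      fromBlocks (B.submatrix (fun i : s => (i : Fin n)) (fun j : s => (j : Fin n)))
        (B.submatrix (fun i : s => (i : Fin n)) (fun j : {x // x ∉ s} => (j : Fin n)))
        0 1 := by
    ext i j
    cases i with
    | inl i =>
      cases j with
      | inl j =>
        simp [C, e, Finset.piecewise_eq_of_mem _ _ _ i.2]
      | inr j =>
        simp [C, e, Finset.piecewise_eq_of_mem _ _ _ i.2]
    | inr i =>
      cases j with
      | inl j =>
        have : (i : Fin n) ≠ (j : Fin n) := by
          intro h
          exact i.2 (h ▸ j.2)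
        simp [C, e, Finset.piecewise_eq_of_notMem _ _ _ i.2, this]
      | inr j =>
        simp [C, e, Finset.piecewise_eq_of_notMem _ _ _ i.2, Matrix.one_apply,
          Subtype.ext_iff]
  calc C.det = (C.submatrix e e).det := (Matrix.det_submatrix_equiv_self e C).symm
    _ = _ := by rw [h1, Matrix.det_fromBlocks_zero₂₁, Matrix.det_one, mul_one]

lemma det_smul_one_add (t : ℝ) (B : Matrix (Fin n) (Fin n) ℝ) :
    (t • (1 : Matrix (Fin n) (Fin n) ℝ) + B).det
      = ∑ s : Finset (Fin n), t ^ (n - s.card) *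
          (B.submatrix (fun i : s => (i : Fin n)) (fun j : s => (j : Fin n))).det := by
  classical
  have key : (t • (1 : Matrix (Fin n) (Fin n) ℝ) + B) =
      Matrix.of ((fun i => (B i : Fin n → ℝ)) +
        (fun i => t • (fun j => if i = j then (1:ℝ) else 0))) := by
    ext i j
    simp [Matrix.one_apply, add_comm]
  rw [key]
  have hadd := (Matrix.detRowAlternating (R := ℝ) (n := Fin n)).toMultilinearMap.map_add_univ
      (fun i => (B i : Fin n → ℝ)) (fun i => t • (fun j => if i = j then (1:ℝ) else 0))
  simp only [AlternatingMap.coe_multilinearMap] at hadd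
  calc (Matrix.of ((fun i => (B i : Fin n → ℝ)) +
        (fun i => t • (fun j => if i = j then (1:ℝ) else 0)))).det
      = ∑ s : Finset (Fin n), Matrix.detRowAlternating
          (s.piecewise (fun i => (B i : Fin n → ℝ))
            (fun i => t • (fun j => if i = j then (1:ℝ) else 0))) := by rw [Matrix.det]; exact hadd
    _ = _ := ?_
  refine Finset.sum_congr rfl ?_
  intro s _
  have hpiece : s.piecewise (fun i => (B i : Fin n → ℝ))
        (fun i => t • (fun j => if i = j then (1:ℝ) else 0))
      = fun i => (if i ∈ s then (1:ℝ) else t) •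
          (s.piecewise (fun i => (B i : Fin n → ℝ))
            (fun i => fun j => if i = j then (1:ℝ) else 0)) i := by
    funext i
    by_cases hi : i ∈ s
    · simp [Finset.piecewise_eq_of_mem _ _ _ hi, hi]
    · simp [Finset.piecewise_eq_of_notMem _ _ _ hi, hi]
  rw [hpiece]
  have hsmul := (Matrix.detRowAlternating (R := ℝ) (n := Fin n)).toMultilinearMap.map_smul_univ
      (fun i => if i ∈ s then (1:ℝ) else t)
      (s.piecewise (fun i => (B i : Fin n → ℝ))
        (fun i => fun j => if i = j then (1:ℝ) else 0))
  simp only [AlternatingMap.coe_multilinearMap] at hsmul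
  rw [hsmul]
  have hprod : (∏ i, (if i ∈ s then (1:ℝ) else t)) = t ^ (n - s.card) := by
    rw [Finset.prod_ite, Finset.prod_const_one, one_mul, Finset.prod_const]
    congr 1
    have : Finset.univ.filter (fun i => ¬ i ∈ s) = sᶜ := by
      ext x; simp
    rw [this, Finset.card_compl, Fintype.card_fin]
  rw [hprod, ← det_piecewise_rows B s]
  rw [smul_eq_mul]
  rfl

lemma det_smul_one_sub_eq_prod {S : Matrix (Fin n) (Fin n) ℝ} (hS : S.IsHermitian) (t : ℝ) :
    (t • (1 : Matrix (Fin n) (Fin n) ℝ) - S).det = ∏ i, (t - hS.eigenvalues i) := by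
  classical
  set U : Matrix (Fin n) (Fin n) ℝ := (hS.eigenvectorUnitary : Matrix (Fin n) (Fin n) ℝ) with hU
  have hUU : U * star U = 1 := Matrix.mem_unitaryGroup_iff.mp hS.eigenvectorUnitary.2
  have hspec : S = U * Matrix.diagonal hS.eigenvalues * star U := by
    have := hS.spectral_theorem
    simpa [RCLike.ofReal_real_eq_id] using this
  have key : t • (1 : Matrix (Fin n) (Fin n) ℝ) - S
      = U * Matrix.diagonal (fun i => t - hS.eigenvalues i) * star U := by
    have : Matrix.diagonal (fun i => t - hS.eigenvalues i)
        = t • (1 : Matrix (Fin n) (Fin n) ℝ) - Matrix.diagonal hS.eigenvalues := by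
      rw [Matrix.smul_one_eq_diagonal]
      rw [← Matrix.diagonal_sub]
    rw [this, Matrix.mul_sub, Matrix.sub_mul, Matrix.mul_smul, Matrix.mul_one,
      Matrix.smul_mul, hUU, ← hspec]
  rw [key, Matrix.det_mul, Matrix.det_mul, mul_comm (U.det), mul_assoc, ← Matrix.det_mul, hUU]
  simp [Matrix.det_diagonal]

lemma quad_vecMulVec {m : Type*} [Fintype m] (w x : m → ℝ) :
    x ⬝ᵥ (vecMulVec w w *ᵥ x) = (w ⬝ᵥ x) ^ 2 := by
  simp only [Matrix.mulVec, dotProduct, Matrix.vecMulVec_apply, pow_two]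
  rw [Finset.sum_mul_sum]
  refine Finset.sum_congr rfl fun i _ => ?_
  rw [Finset.mul_sum]
  refine Finset.sum_congr rfl fun j _ => ?_
  ring

lemma isHermitian_vecMulVec' {m : Type*} [Fintype m] (w : m → ℝ) :
    (vecMulVec w w).IsHermitian := by
  ext i j
  simp only [conjTranspose_apply, Matrix.vecMulVec_apply, star_trivial]
  ring

lemma dotProduct_cauchy_schwarz {m : Type*} [Fintype m] (p q : m → ℝ) :
    (p ⬝ᵥ q) ^ 2 ≤ (p ⬝ᵥ p) * (q ⬝ᵥ q) := by
  have h := Finset.sum_mul_sq_le_sq_mul_sq Finset.univ p q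
  calc (p ⬝ᵥ q) ^ 2 = (∑ i, p i * q i) ^ 2 := rfl
    _ ≤ (∑ i, p i ^ 2) * (∑ i, q i ^ 2) := h
    _ = (p ⬝ᵥ p) * (q ⬝ᵥ q) := by
        simp only [dotProduct, pow_two]

/-- If `A` is positive definite and `w ⬝ᵥ A⁻¹ *ᵥ w < 1` then `A - w wᵀ` is positive definite. -/
lemma posDef_sub_vecMulVec {m : Type*} [Fintype m] [DecidableEq m] {A : Matrix m m ℝ}
    (hA : A.PosDef) (w : m → ℝ) (hc : w ⬝ᵥ (A⁻¹ *ᵥ w) < 1) :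
    (A - vecMulVec w w).PosDef := by
  have hAH : A.IsHermitian := hA.1
  have hAT : Aᵀ = A := by
    rw [← conjTranspose_eq_transpose_of_trivial]; exact hAH.eq
  have hdetA : IsUnit A.det := hA.det_pos.ne'.isUnit
  obtain ⟨P, hPP, hPT⟩ : ∃ P : Matrix m m ℝ, P * P = A ∧ Pᵀ = P := by
    open scoped MatrixOrder in
    exact ⟨CFC.sqrt A, CFC.sqrt_mul_sqrt_self A hA.posSemidef.nonneg, by
      rw [← conjTranspose_eq_transpose_of_trivial]
      exact (CFC.sqrt_nonneg A).posSemidef.1.eq⟩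
  have key : ∀ y z : m → ℝ, y ⬝ᵥ (A *ᵥ z) = (P *ᵥ y) ⬝ᵥ (P *ᵥ z) := by
    intro y z
    rw [← hPP, ← Matrix.mulVec_mulVec, Matrix.dotProduct_mulVec, ← Matrix.mulVec_transpose, hPT]
  have hCS : ∀ x : m → ℝ, (w ⬝ᵥ x) ^ 2 ≤ (w ⬝ᵥ (A⁻¹ *ᵥ w)) * (x ⬝ᵥ (A *ᵥ x)) := by
    intro x
    set a := A⁻¹ *ᵥ w with ha
    have hw : A *ᵥ a = w := by
      rw [ha, Matrix.mulVec_mulVec, Matrix.mul_nonsing_inv _ hdetA, Matrix.one_mulVec]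
    have hwx : w ⬝ᵥ x = (P *ᵥ a) ⬝ᵥ (P *ᵥ x) := by
      calc w ⬝ᵥ x = (A *ᵥ a) ⬝ᵥ x := by rw [hw]
        _ = x ⬝ᵥ (A *ᵥ a) := dotProduct_comm _ _
        _ = (P *ᵥ x) ⬝ᵥ (P *ᵥ a) := key x a
        _ = (P *ᵥ a) ⬝ᵥ (P *ᵥ x) := dotProduct_comm _ _
    have hwa : w ⬝ᵥ a = (P *ᵥ a) ⬝ᵥ (P *ᵥ a) := by
      calc w ⬝ᵥ a = (A *ᵥ a) ⬝ᵥ a := by rw [hw]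
        _ = a ⬝ᵥ (A *ᵥ a) := dotProduct_comm _ _
        _ = (P *ᵥ a) ⬝ᵥ (P *ᵥ a) := key a a
    have hxx : x ⬝ᵥ (A *ᵥ x) = (P *ᵥ x) ⬝ᵥ (P *ᵥ x) := key x x
    rw [hwx, hwa, hxx]
    exact dotProduct_cauchy_schwarz _ _
  refine Matrix.PosDef.of_dotProduct_mulVec_pos ?_ ?_
  · exact hAH.sub (isHermitian_vecMulVec' w)
  · intro x hx
    have hxA : 0 < x ⬝ᵥ (A *ᵥ x) := by
      have := hA.dotProduct_mulVec_pos hx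
      simpa using this
    have hq : star x ⬝ᵥ ((A - vecMulVec w w) *ᵥ x)
        = x ⬝ᵥ (A *ᵥ x) - (w ⬝ᵥ x) ^ 2 := by
      rw [Matrix.sub_mulVec, star_trivial, dotProduct_sub, quad_vecMulVec]
    rw [hq]
    nlinarith [hCS x, mul_pos (sub_pos.mpr hc) hxA]

lemma det_sub_vecMulVec {m : Type*} [Fintype m] [DecidableEq m] {A : Matrix m m ℝ}
    (hA : IsUnit A.det) (w : m → ℝ) :
    (A - vecMulVec w w).det = A.det * (1 - w ⬝ᵥ (A⁻¹ *ᵥ w)) := by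
  have hneg : Matrix.replicateCol Unit (-w) * Matrix.replicateRow Unit w
      = -(Matrix.replicateCol Unit w * Matrix.replicateRow Unit w) := by
    ext i j
    simp [Matrix.mul_apply]
  have h1 : A - vecMulVec w w = A + Matrix.replicateCol Unit (-w) * Matrix.replicateRow Unit w := by
    rw [hneg, Matrix.vecMulVec_eq Unit, sub_eq_add_neg]
  rw [h1, Matrix.det_add_replicateCol_mul_replicateRow hA]
  congr 1
  rw [Matrix.det_unique, Matrix.add_apply, Matrix.one_apply_eq, Matrix.mul_assoc,
    ← Matrix.replicateCol_mulVec, Matrix.replicateRow_mul_replicateCol_apply]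
  have : A⁻¹ *ᵥ (-w) = -(A⁻¹ *ᵥ w) := by
    rw [Matrix.mulVec_neg]
  rw [this, dotProduct_neg, sub_eq_add_neg]

lemma exists_decomp {S : Matrix (Fin n) (Fin n) ℝ} (hS : S.IsHermitian)
    (huniq : ∀ i j, 0 < hS.eigenvalues i → 0 < hS.eigenvalues j → i = j) :
    ∃ (u : Fin n → ℝ) (M : Matrix (Fin n) (Fin n) ℝ),
      S = vecMulVec u u + M ∧ (-M).PosSemidef := by
  classical
  set eig := hS.eigenvalues with heig
  set U : Matrix (Fin n) (Fin n) ℝ := (hS.eigenvectorUnitary : Matrix (Fin n) (Fin n) ℝ) with hU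
  have hspec : S = U * Matrix.diagonal eig * star U := by
    have := hS.spectral_theorem
    simpa [RCLike.ofReal_real_eq_id] using this
  set M : Matrix (Fin n) (Fin n) ℝ := U * Matrix.diagonal (fun i => min (eig i) 0) * star U
    with hM
  have hMpsd : (-M).PosSemidef := by
    have hMeq : -M = U * Matrix.diagonal (fun i => -(min (eig i) 0)) * star U := by
      rw [hM]
      have : Matrix.diagonal (fun i => -(min (eig i) 0))
          = -Matrix.diagonal (fun i => min (eig i) 0) := by
        rw [← Matrix.diagonal_neg]
      rw [this, Matrix.mul_neg, Matrix.neg_mul]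
    rw [hMeq, Matrix.star_eq_conjTranspose]
    exact (Matrix.posSemidef_diagonal_iff.mpr
      (fun i => by simp [min_le_right (eig i) 0])).mul_mul_conjTranspose_same U
  have entry : ∀ (f : Fin n → ℝ) (a b : Fin n),
      (U * Matrix.diagonal f * star U) a b = ∑ k, U a k * f k * U b k := by
    intro f a b
    rw [Matrix.mul_apply]
    refine Finset.sum_congr rfl fun k _ => ?_
    rw [Matrix.mul_diagonal, Matrix.star_eq_conjTranspose, Matrix.conjTranspose_apply]
    simp
  by_cases hpos : ∃ i0, 0 < eig i0
  · obtain ⟨i0, hi0⟩ := hpos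
    refine ⟨fun j => Real.sqrt (eig i0) * U j i0, M, ?_, hMpsd⟩
    ext a b
    have hS_ab : S a b = ∑ k, U a k * eig k * U b k := by
      rw [hspec]; exact entry eig a b
    have hM_ab : M a b = ∑ k, U a k * min (eig k) 0 * U b k := entry _ a b
    have huu : vecMulVec (fun j => Real.sqrt (eig i0) * U j i0)
        (fun j => Real.sqrt (eig i0) * U j i0) a b
        = eig i0 * U a i0 * U b i0 := by
      rw [Matrix.vecMulVec_apply]
      have : Real.sqrt (eig i0) * Real.sqrt (eig i0) = eig i0 :=
        Real.mul_self_sqrt hi0.le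
      linear_combination (U a i0 * U b i0) * this
    have hmax : (∑ k, U a k * max (eig k) 0 * U b k) = eig i0 * U a i0 * U b i0 := by
      rw [Finset.sum_eq_single i0]
      · rw [max_eq_left hi0.le]; ring
      · intro k _ hk
        have hk0 : ¬ 0 < eig k := fun h => hk (huniq k i0 h hi0)
        rw [max_eq_right (le_of_not_gt hk0)]
        ring
      · intro h; exact absurd (Finset.mem_univ i0) h
    rw [Matrix.add_apply, hS_ab, hM_ab, huu, ← hmax, ← Finset.sum_add_distrib]
    refine Finset.sum_congr rfl fun k _ => ?_
    have : max (eig k) 0 + min (eig k) 0 = eig k := by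
      rw [max_add_min, add_zero]
    linear_combination (-(U a k * U b k)) * this
  · refine ⟨0, M, ?_, hMpsd⟩
    have hzero : vecMulVec (0 : Fin n → ℝ) (0 : Fin n → ℝ) = (0 : Matrix (Fin n) (Fin n) ℝ) := by
      ext a b; simp [Matrix.vecMulVec_apply]
    rw [hzero, zero_add, hspec, hM]
    have heq : (fun i => min (eig i) 0) = eig :=
      funext fun i => min_eq_left (le_of_not_gt (fun h => hpos ⟨i, h⟩))
    rw [heq]

lemma trace_eq_sum_eigenvalues' {m : Type*} [Fintype m] [DecidableEq m]
    {A : Matrix m m ℝ} (hA : A.IsHermitian) :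
    A.trace = ∑ i, hA.eigenvalues i := by
  conv_lhs => rw [hA.spectral_theorem, Unitary.conjStarAlgAut_apply]
  rw [Matrix.trace_mul_cycle]
  have h1 : (star (hA.eigenvectorUnitary : Matrix m m ℝ)) *
      (hA.eigenvectorUnitary : Matrix m m ℝ) = 1 :=
    Matrix.mem_unitaryGroup_iff'.mp hA.eigenvectorUnitary.2
  rw [h1, Matrix.one_mul]
  simpa [RCLike.ofReal_real_eq_id] using Matrix.trace_diagonal (hA.eigenvalues)

lemma mandelstam_forward {S : Matrix (Fin n) (Fin n) ℝ} (hS : S.IsHermitian)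
    (hdiag : ∀ i, 0 ≤ S i i)
    (huniq : ∀ i j, 0 < hS.eigenvalues i → 0 < hS.eigenvalues j → i = j)
    (I : Finset (Fin n)) (hI : I.Nonempty) :
    0 ≤ (-1 : ℝ) ^ (I.card - 1) *
      (S.submatrix (fun i : I => (i : Fin n)) (fun j : I => (j : Fin n))).det := by
  classical
  obtain ⟨u, M, hSM, hMpsd⟩ := exists_decomp hS huniq
  set T : Matrix I I ℝ := S.submatrix (fun i : I => (i : Fin n)) (fun j : I => (j : Fin n))
    with hT
  have hk : 1 ≤ I.card := Finset.card_pos.mpr hI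
  suffices hdet : (-T).det ≤ 0 by
    have h1 : (-T).det = (-1 : ℝ) ^ (Fintype.card I) * T.det := Matrix.det_neg T
    rw [Fintype.card_coe] at h1
    have h2 : ((-1 : ℝ)) ^ I.card = -(-1 : ℝ) ^ (I.card - 1) := by
      conv_lhs => rw [show I.card = (I.card - 1) + 1 from (Nat.sub_add_cancel hk).symm]
      rw [pow_succ]; ring
    rw [h2] at h1
    linarith [h1 ▸ hdet]
  -- the key estimate for every positive ε
  have claim : ∀ ε : ℝ, 0 < ε →
      (ε • (1 : Matrix I I ℝ) - T).det ≤ ((I.card : ℝ) * ε) ^ I.card := by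
    intro ε hε
    set w : I → ℝ := fun i => u (i : Fin n) with hw
    set A : Matrix I I ℝ :=
      ε • (1 : Matrix I I ℝ) -
        M.submatrix (fun i : I => (i : Fin n)) (fun j : I => (j : Fin n)) with hA
    have hTsplit : T = vecMulVec w w +
        M.submatrix (fun i : I => (i : Fin n)) (fun j : I => (j : Fin n)) := by
      rw [hT, hSM]
      ext a b
      simp [Matrix.submatrix_apply, Matrix.add_apply, Matrix.vecMulVec_apply, hw]
    have hsub_eq : ε • (1 : Matrix I I ℝ) - T = A - vecMulVec w w := by
      rw [hTsplit, hA]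
      ext a b
      simp [Matrix.sub_apply, Matrix.add_apply]
      ring
    have hId : (ε • (1 : Matrix I I ℝ)).PosDef := by
      rw [Matrix.smul_one_eq_diagonal]
      exact Matrix.posDef_diagonal_iff.mpr fun i => hε
    have hMsub : ((-M).submatrix (fun i : I => (i : Fin n))
        (fun j : I => (j : Fin n))).PosSemidef := hMpsd.submatrix _
    have hApd : A.PosDef := by
      have : A = (-M).submatrix (fun i : I => (i : Fin n)) (fun j : I => (j : Fin n))
          + ε • (1 : Matrix I I ℝ) := by
        rw [hA]
        ext a b
        simp [Matrix.sub_apply, Matrix.add_apply, Matrix.submatrix_apply]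
        ring
      rw [this]
      exact Matrix.PosDef.posSemidef_add hMsub hId
    have hdetA : IsUnit A.det := hApd.det_pos.ne'.isUnit
    have hdet1 : (ε • (1 : Matrix I I ℝ) - T).det
        = A.det * (1 - w ⬝ᵥ (A⁻¹ *ᵥ w)) := by
      rw [hsub_eq, det_sub_vecMulVec hdetA]
    have hrhs : (0:ℝ) ≤ ((I.card : ℝ) * ε) ^ I.card := by positivity
    by_cases hc : 1 ≤ w ⬝ᵥ (A⁻¹ *ᵥ w)
    · refine le_trans ?_ hrhs
      rw [hdet1]
      have : 1 - w ⬝ᵥ (A⁻¹ *ᵥ w) ≤ 0 := by linarith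
      exact mul_nonpos_of_nonneg_of_nonpos hApd.det_pos.le this
    · push_neg at hc
      have hBpd : (A - vecMulVec w w).PosDef := posDef_sub_vecMulVec hApd w hc
      rw [hsub_eq]
      set B := A - vecMulVec w w with hB
      have hBH : B.IsHermitian := hBpd.1
      have hBdet : B.det = ∏ i, hBH.eigenvalues i := by
        simpa using hBH.det_eq_prod_eigenvalues
      have hBtrace : B.trace = ∑ i, hBH.eigenvalues i := trace_eq_sum_eigenvalues' hBH
      have hBii : ∀ i : I, B i i ≤ ε := by
        intro i
        have : B i i = ε - T i i := by
          rw [← hsub_eq]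
          simp [Matrix.sub_apply, Matrix.smul_apply, Matrix.one_apply_eq]
        rw [this]
        have : 0 ≤ T i i := hdiag (i : Fin n)
        linarith
      have htr : B.trace ≤ (I.card : ℝ) * ε := by
        have h1 : B.trace = ∑ i : I, B i i := rfl
        rw [h1]
        calc ∑ i : I, B i i ≤ ∑ _i : I, ε := Finset.sum_le_sum fun i _ => hBii i
          _ = (I.card : ℝ) * ε := by
            rw [Finset.sum_const, Finset.card_univ, Fintype.card_coe, nsmul_eq_mul]
      have heigle : ∀ i : I, hBH.eigenvalues i ≤ (I.card : ℝ) * ε := by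
        intro i
        calc hBH.eigenvalues i ≤ ∑ j, hBH.eigenvalues j :=
            Finset.single_le_sum (fun j _ => (hBpd.eigenvalues_pos j).le) (Finset.mem_univ i)
          _ = B.trace := hBtrace.symm
          _ ≤ (I.card : ℝ) * ε := htr
      rw [hBdet]
      calc ∏ i, hBH.eigenvalues i ≤ ∏ _i : I, ((I.card : ℝ) * ε) :=
          Finset.prod_le_prod (fun i _ => (hBpd.eigenvalues_pos i).le)
            (fun i _ => heigle i)
        _ = ((I.card : ℝ) * ε) ^ I.card := by
            rw [Finset.prod_const, Finset.card_univ, Fintype.card_coe]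
  -- pass to the limit ε → 0⁺
  have hcont : Continuous (fun ε : ℝ => (ε • (1 : Matrix I I ℝ) - T).det) := by
    apply Continuous.matrix_det
    exact (continuous_id.smul continuous_const).sub continuous_const
  have h0 : Tendsto (fun ε : ℝ => (ε • (1 : Matrix I I ℝ) - T).det)
      (𝓝[>] (0:ℝ)) (𝓝 ((-T).det)) := by
    have := hcont.tendsto 0
    simp only [zero_smul, zero_sub] at this
    exact this.mono_left nhdsWithin_le_nhds
  have h1 : Tendsto (fun ε : ℝ => ((I.card : ℝ) * ε) ^ I.card)
      (𝓝[>] (0:ℝ)) (𝓝 0) := by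
    have hc2 : Continuous (fun ε : ℝ => ((I.card : ℝ) * ε) ^ I.card) := by continuity
    have := hc2.tendsto 0
    simp only [mul_zero, zero_pow (Nat.one_le_iff_ne_zero.mp hk)] at this
    exact this.mono_left nhdsWithin_le_nhds
  refine le_of_tendsto_of_tendsto h0 h1 ?_
  exact eventually_nhdsWithin_of_forall fun ε hε => claim ε hε

lemma mandelstam_backward {S : Matrix (Fin n) (Fin n) ℝ} (hS : S.IsHermitian)
    (h : ∀ I : Finset (Fin n), I.Nonempty →
        0 ≤ (-1 : ℝ) ^ (I.card - 1) *
          (S.submatrix (fun i : I => (i : Fin n)) (fun j : I => (j : Fin n))).det) :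
    ∀ i j, 0 < hS.eigenvalues i → 0 < hS.eigenvalues j → i = j := by
  classical
  intro i j hi hj
  by_contra hne
  have hn0 : 0 < n := i.pos
  set eig := hS.eigenvalues with heig
  -- the characteristic-type function
  set P : ℝ → ℝ := fun t => (t • (1 : Matrix (Fin n) (Fin n) ℝ) - S).det with hP
  have hProd : ∀ t, P t = ∏ k, (t - eig k) := fun t => det_smul_one_sub_eq_prod hS t
  set d : Finset (Fin n) → ℝ := fun s =>
    ((-S).submatrix (fun i : s => (i : Fin n)) (fun j : s => (j : Fin n))).det with hd
  have hSum : ∀ t, P t = ∑ s : Finset (Fin n), t ^ (n - s.card) * d s := by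
    intro t
    show (t • (1 : Matrix (Fin n) (Fin n) ℝ) - S).det = _
    rw [sub_eq_add_neg, det_smul_one_add]
  have hdempty : d ∅ = 1 := by
    rw [hd]
    exact Matrix.det_isEmpty
  have hdneg : ∀ s : Finset (Fin n), s.Nonempty → d s ≤ 0 := by
    intro s hs
    have hcard : 1 ≤ s.card := Finset.card_pos.mpr hs
    have hsub : ((-S).submatrix (fun i : s => (i : Fin n)) (fun j : s => (j : Fin n)))
        = -(S.submatrix (fun i : s => (i : Fin n)) (fun j : s => (j : Fin n))) := by
      ext a b; simp
    show ((-S).submatrix (fun i : s => (i : Fin n)) (fun j : s => (j : Fin n))).det ≤ 0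
    rw [hsub, Matrix.det_neg, Fintype.card_coe]
    have : ((-1 : ℝ)) ^ s.card = -((-1 : ℝ) ^ (s.card - 1)) := by
      conv_lhs => rw [show s.card = (s.card - 1) + 1 from (Nat.sub_add_cancel hcard).symm]
      rw [pow_succ]
      ring
    rw [this, neg_mul, neg_nonpos]
    exact h s hs
  -- derivative
  set Q : ℝ → ℝ := fun t => ∑ s : Finset (Fin n),
      d s * (((n - s.card : ℕ) : ℝ) * t ^ (n - s.card - 1)) with hQdef
  have hderiv : ∀ t, HasDerivAt P (Q t) t := by
    intro t
    have hP' : P = fun t => ∑ s : Finset (Fin n), t ^ (n - s.card) * d s := funext hSum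
    rw [hP', hQdef]
    have : ∀ s ∈ (Finset.univ : Finset (Finset (Fin n))),
        HasDerivAt (fun t : ℝ => t ^ (n - s.card) * d s)
          (d s * (((n - s.card : ℕ) : ℝ) * t ^ (n - s.card - 1))) t := by
      intro s _
      have := (hasDerivAt_pow (n - s.card) t).mul_const (d s)
      rw [mul_comm (d s)]
      exact this
    exact HasDerivAt.fun_sum this
  -- both min and max of the two eigenvalues are roots
  set lam := min (eig i) (eig j) with hlam
  set mu := max (eig i) (eig j) with hmu
  have hlampos : 0 < lam := lt_min hi hj
  have hlammu : lam ≤ mu := min_le_max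
  have hPlam : P lam = 0 := by
    rw [hProd]
    rcases min_cases (eig i) (eig j) with ⟨he, _⟩ | ⟨he, _⟩
    · have hl : lam = eig i := by rw [hlam]; exact he
      exact Finset.prod_eq_zero (Finset.mem_univ i) (by rw [hl, sub_self])
    · have hl : lam = eig j := by rw [hlam]; exact he
      exact Finset.prod_eq_zero (Finset.mem_univ j) (by rw [hl, sub_self])
  have hPmu : P mu = 0 := by
    rw [hProd]
    rcases max_cases (eig i) (eig j) with ⟨he, _⟩ | ⟨he, _⟩
    · have hl : mu = eig i := by rw [hmu]; exact he
      exact Finset.prod_eq_zero (Finset.mem_univ i) (by rw [hl, sub_self])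
    · have hl : mu = eig j := by rw [hmu]; exact he
      exact Finset.prod_eq_zero (Finset.mem_univ j) (by rw [hl, sub_self])
  -- find ξ ≥ lam, ξ > 0, with Q ξ = 0
  have hPcont : Continuous P := by
    rw [funext hProd]
    exact continuous_finset_prod _ (fun k _ => (continuous_id.sub continuous_const))
  obtain ⟨xi, hxilam, hxipos, hQxi⟩ : ∃ xi, lam ≤ xi ∧ 0 < xi ∧ Q xi = 0 := by
    rcases eq_or_lt_of_le hlammu with heq | hlt
    · -- double eigenvalue: eig i = eig j = lam
      have hij : eig i = eig j := by
        rcases le_total (eig i) (eig j) with hle | hle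
        · have h1 : lam = eig i := min_eq_left hle
          have h2 : mu = eig j := max_eq_right hle
          rw [← h1, ← h2, heq]
        · have h1 : lam = eig j := min_eq_right hle
          have h2 : mu = eig i := max_eq_left hle
          rw [← h1, ← h2, ← heq]
      have hlami : lam = eig i := by rw [hlam, hij, min_self]
      have hder2 : HasDerivAt P
          (∑ k, (∏ l ∈ Finset.univ.erase k, (lam - eig l)) • (1 : ℝ)) lam := by
        have hP' : P = fun t => ∏ k, (t - eig k) := funext hProd
        rw [hP']
        exact HasDerivAt.fun_finsetProd (f := fun k t => t - eig k) (fun k _ => (hasDerivAt_id _).sub_const _)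
      have hzero : (∑ k, (∏ l ∈ Finset.univ.erase k, (lam - eig l)) • (1 : ℝ)) = 0 := by
        refine Finset.sum_eq_zero fun k _ => ?_
        rcases eq_or_ne k i with rfl | hki
        · have hjmem : j ∈ Finset.univ.erase k :=
            Finset.mem_erase.mpr ⟨fun hjk => hne hjk.symm, Finset.mem_univ j⟩
          rw [Finset.prod_eq_zero hjmem (by rw [hlami, hij, sub_self]), zero_smul]
        · have himem : i ∈ Finset.univ.erase k :=
            Finset.mem_erase.mpr ⟨fun hik => hki hik.symm, Finset.mem_univ i⟩
          rw [Finset.prod_eq_zero himem (by rw [hlami, sub_self]), zero_smul]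
      exact ⟨lam, le_refl _, hlampos, by rw [(hderiv lam).unique hder2, hzero]⟩
    · obtain ⟨c, hc, hc0⟩ := exists_hasDerivAt_eq_zero hlt hPcont.continuousOn
        (hPlam.trans hPmu.symm) (fun x _ => hderiv x)
      exact ⟨c, le_of_lt hc.1, lt_trans hlampos hc.1, hc0⟩
  -- now derive the contradiction
  set E := (Finset.univ : Finset (Finset (Fin n))).erase ∅ with hE
  have hmemE : ∀ s ∈ E, 1 ≤ s.card ∧ s.card ≤ n := by
    intro s hs
    have hne' : s ≠ ∅ := (Finset.mem_erase.mp hs).1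
    constructor
    · exact Finset.card_pos.mpr (Finset.nonempty_iff_ne_empty.mpr hne')
    · simpa using Finset.card_le_univ s
  -- Step A
  have hQsplit : ∑ s ∈ E, d s * (((n - s.card : ℕ) : ℝ) * xi ^ (n - s.card - 1))
      + (n : ℝ) * xi ^ (n - 1) = 0 := by
    have h0 : ∑ s : Finset (Fin n), d s * (((n - s.card : ℕ) : ℝ) * xi ^ (n - s.card - 1)) = 0 :=
      hQxi
    rw [← Finset.sum_erase_add _ _ (Finset.mem_univ (∅ : Finset (Fin n)))] at h0
    rw [← hE] at h0
    simpa [hdempty] using h0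
  have hstepA : (n : ℝ) * xi ^ (n - 1)
      = ∑ s ∈ E, (-(d s)) * (((n - s.card : ℕ) : ℝ) * xi ^ (n - s.card - 1)) := by
    have : ∑ s ∈ E, (-(d s)) * (((n - s.card : ℕ) : ℝ) * xi ^ (n - s.card - 1))
        = -∑ s ∈ E, d s * (((n - s.card : ℕ) : ℝ) * xi ^ (n - s.card - 1)) := by
      rw [← Finset.sum_neg_distrib]
      exact Finset.sum_congr rfl fun s _ => by ring
    rw [this]
    linarith [hQsplit]
  -- Step B multiply by xi
  have hstepB : (n : ℝ) * xi ^ n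
      = ∑ s ∈ E, (-(d s)) * (((n - s.card : ℕ) : ℝ) * xi ^ (n - s.card)) := by
    have hl : (n : ℝ) * xi ^ n = ((n : ℝ) * xi ^ (n - 1)) * xi := by
      rw [mul_assoc, ← pow_succ, Nat.sub_add_cancel hn0]
    rw [hl, hstepA, Finset.sum_mul]
    refine Finset.sum_congr rfl fun s hs => ?_
    rcases Nat.eq_zero_or_pos (n - s.card) with h0 | hpos
    · rw [h0]; simp
    · rw [mul_assoc, mul_assoc, ← pow_succ, Nat.sub_add_cancel hpos]
  -- Step D' : lam^n = ∑ over E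
  have hlamroot : lam ^ n = ∑ s ∈ E, (-(d s)) * lam ^ (n - s.card) := by
    have h1 : ∑ s : Finset (Fin n), lam ^ (n - s.card) * d s = 0 := by
      rw [← hSum lam]; exact hPlam
    rw [← Finset.sum_erase_add _ _ (Finset.mem_univ (∅ : Finset (Fin n)))] at h1
    rw [← hE] at h1
    simp only [hdempty, Finset.card_empty, Nat.sub_zero, mul_one] at h1
    have : ∑ s ∈ E, (-(d s)) * lam ^ (n - s.card)
        = -∑ s ∈ E, lam ^ (n - s.card) * d s := by
      rw [← Finset.sum_neg_distrib]
      exact Finset.sum_congr rfl fun s _ => by ring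
    rw [this]
    linarith
  -- Step C
  have hstepC : (n : ℝ) * xi ^ n ≤ ((n - 1 : ℕ) : ℝ) * ∑ s ∈ E, (-(d s)) * xi ^ (n - s.card) := by
    rw [hstepB, Finset.mul_sum]
    refine Finset.sum_le_sum fun s hs => ?_
    have hd0 : 0 ≤ -(d s) := by
      have := hdneg s (Finset.nonempty_iff_ne_empty.mpr (Finset.mem_erase.mp hs).1)
      linarith
    have hcast : ((n - s.card : ℕ) : ℝ) ≤ ((n - 1 : ℕ) : ℝ) :=
      Nat.cast_le.mpr (Nat.sub_le_sub_left (hmemE s hs).1 n)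
    have hxp : (0:ℝ) ≤ xi ^ (n - s.card) := le_of_lt (pow_pos hxipos _)
    calc (-(d s)) * (((n - s.card : ℕ) : ℝ) * xi ^ (n - s.card))
        ≤ (-(d s)) * (((n - 1 : ℕ) : ℝ) * xi ^ (n - s.card)) := by
          apply mul_le_mul_of_nonneg_left _ hd0
          exact mul_le_mul_of_nonneg_right hcast hxp
      _ = ((n - 1 : ℕ) : ℝ) * ((-(d s)) * xi ^ (n - s.card)) := by ring
  -- Step D
  have hstepD : ∑ s ∈ E, (-(d s)) * xi ^ (n - s.card) ≤ xi ^ n := by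
    have hkey : (∑ s ∈ E, (-(d s)) * xi ^ (n - s.card)) * lam ^ n
        ≤ (∑ s ∈ E, (-(d s)) * lam ^ (n - s.card)) * xi ^ n := by
      rw [Finset.sum_mul, Finset.sum_mul]
      refine Finset.sum_le_sum fun s hs => ?_
      obtain ⟨h1, h2⟩ := hmemE s hs
      have hd0 : 0 ≤ -(d s) := by
        have := hdneg s (Finset.nonempty_iff_ne_empty.mpr (Finset.mem_erase.mp hs).1)
        linarith
      have hlx : lam ^ s.card ≤ xi ^ s.card :=
        pow_le_pow_left₀ (le_of_lt hlampos) hxilam _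
      have hlamn : lam ^ n = lam ^ (n - s.card) * lam ^ s.card := by
        rw [← pow_add, Nat.sub_add_cancel h2]
      have hxin : xi ^ n = xi ^ (n - s.card) * xi ^ s.card := by
        rw [← pow_add, Nat.sub_add_cancel h2]
      rw [hlamn, hxin]
      calc (-(d s)) * xi ^ (n - s.card) * (lam ^ (n - s.card) * lam ^ s.card)
          = ((-(d s)) * xi ^ (n - s.card) * lam ^ (n - s.card)) * lam ^ s.card := by ring
        _ ≤ ((-(d s)) * xi ^ (n - s.card) * lam ^ (n - s.card)) * xi ^ s.card := by
            apply mul_le_mul_of_nonneg_left hlx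
            have := pow_pos hxipos (n - s.card)
            have := pow_pos hlampos (n - s.card)
            positivity
        _ = (-(d s)) * lam ^ (n - s.card) * (xi ^ (n - s.card) * xi ^ s.card) := by ring
    rw [← hlamroot] at hkey
    have hlp : (0:ℝ) < lam ^ n := pow_pos hlampos n
    have := le_of_mul_le_mul_right (by linarith [hkey] : (∑ s ∈ E, (-(d s)) * xi ^ (n - s.card)) * lam ^ n ≤ xi ^ n * lam ^ n) hlp
    exact this
  -- Step E
  have hxin : (0:ℝ) < xi ^ n := pow_pos hxipos n
  have hfinal : (n : ℝ) * xi ^ n ≤ ((n - 1 : ℕ) : ℝ) * xi ^ n := by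
    calc (n : ℝ) * xi ^ n ≤ ((n - 1 : ℕ) : ℝ) * ∑ s ∈ E, (-(d s)) * xi ^ (n - s.card) := hstepC
      _ ≤ ((n - 1 : ℕ) : ℝ) * xi ^ n := by
          apply mul_le_mul_of_nonneg_left hstepD
          positivity
  have : (n : ℝ) ≤ ((n - 1 : ℕ) : ℝ) := le_of_mul_le_mul_right hfinal hxin
  have : n ≤ n - 1 := Nat.cast_le.mp this
  have : n - 1 < n := Nat.sub_lt hn0 one_pos
  omega

end MandelstamAux

/-- Lemma (characterization of Mandelstam matrices): a real symmetric `n × n` matrix `S`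
has all diagonal entries nonnegative and at most one positive eigenvalue if and only if
`(-1)^(|I|-1) · det(S_I) ≥ 0` for every nonempty subset `I ⊆ {1,…,n}`, where `S_I` is the
principal submatrix with rows and columns indexed by `I`. -/
theorem mandelstam_iff_principal_minors (n : ℕ) (S : Matrix (Fin n) (Fin n) ℝ)
    (hS : S.IsHermitian) :
    ((∀ i, 0 ≤ S i i) ∧ Nat.card {i : Fin n // 0 < hS.eigenvalues i} ≤ 1) ↔
      ∀ I : Finset (Fin n), I.Nonempty →
        0 ≤ (-1 : ℝ) ^ (I.card - 1) *
          (S.submatrix (fun i : I => (i : Fin n)) (fun j : I => (j : Fin n))).det := by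
  classical
  constructor
  · rintro ⟨hdiag, hcard⟩ I hI
    rw [Nat.card_eq_fintype_card, Fintype.card_le_one_iff_subsingleton] at hcard
    have huniq : ∀ i j, 0 < hS.eigenvalues i → 0 < hS.eigenvalues j → i = j := by
      intro i j hi hj
      exact congrArg Subtype.val
        (@Subsingleton.elim _ hcard (⟨i, hi⟩ : {i : Fin n // 0 < hS.eigenvalues i}) ⟨j, hj⟩)
    exact mandelstam_forward hS hdiag huniq I hI
  · intro h
    constructor
    · intro i
      have h1 := h {i} (Finset.singleton_nonempty i)
      haveI hu : Unique ({x // x ∈ ({i} : Finset (Fin n))}) :=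
        ⟨⟨⟨i, Finset.mem_singleton_self i⟩⟩,
          by rintro ⟨x, hx⟩; exact Subtype.ext (Finset.mem_singleton.mp hx)⟩
      rw [Finset.card_singleton] at h1
      have h2 : (0:ℝ) ≤ S ((default : {x // x ∈ ({i} : Finset (Fin n))}) : Fin n)
          ((default : {x // x ∈ ({i} : Finset (Fin n))}) : Fin n) := by
        simpa [Matrix.det_unique] using h1
      have h3 : ((default : {x // x ∈ ({i} : Finset (Fin n))}) : Fin n) = i :=
        Finset.mem_singleton.mp ((default : {x // x ∈ ({i} : Finset (Fin n))}).2)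
      rwa [h3] at h2
    · rw [Nat.card_eq_fintype_card, Fintype.card_le_one_iff_subsingleton]
      constructor
      rintro ⟨i, hi⟩ ⟨j, hj⟩
      exact Subtype.ext (mandelstam_backward hS h i j hi hj)
end

section
/- Let d ≥ 0 be an integer and let S = (s_ij) be a real symmetric n×n matrix. Then S has all diagonal entries nonnegative, at most one positive eigenvalue, and rank at most 1+d, if and only if there exist vectors p⁽¹⁾, …, p⁽ⁿ⁾ in ℝ^{1+d} such that p⁽ⁱ⁾·p⁽ⁱ⁾ ≥ 0 for all i and s_ij = p⁽ⁱ⁾·p⁽ʲ⁾ for all i, j, where · denotes the Minkowski inner product. -/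
open Matrix

/-- The Minkowski inner product on `ℝ^{1+d}` (coordinates indexed by `Fin (d+1)`, with
index `0` the time coordinate): `p·q = p₀q₀ - p₁q₁ - ⋯ - p_d q_d`. -/
def minkowski (d : ℕ) (p q : Fin (d + 1) → ℝ) : ℝ :=
  p 0 * q 0 - ∑ k : Fin d, p k.succ * q k.succ

private lemma mink_sum_embed {α : Type*} [Fintype α] {d : ℕ} (e : α ↪ Fin d) (f g : α → ℝ) :
    ∑ m : Fin d, (∑ a, if e a = m then f a else 0) * (∑ b, if e b = m then g b else 0)
      = ∑ a, f a * g a := by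
  have h1 : ∀ m : Fin d, (∑ a, if e a = m then f a else 0) * (∑ b, if e b = m then g b else 0)
      = ∑ a, if e a = m then f a * (∑ b, if e b = m then g b else 0) else 0 := by
    intro m; rw [Finset.sum_mul]
    exact Finset.sum_congr rfl fun a _ => by split <;> simp
  rw [Finset.sum_congr rfl fun m _ => h1 m, Finset.sum_comm]
  refine Finset.sum_congr rfl fun a _ => ?_
  rw [Finset.sum_ite_eq]
  simp only [Finset.mem_univ, if_true]
  congr 1
  classical
  simp [e.injective.eq_iff]

private lemma mink_key {n : ℕ} (S : Matrix (Fin n) (Fin n) ℝ) (hS : S.IsHermitian) (i j : Fin n) :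
    S i j = ∑ k, hS.eigenvalues k * (hS.eigenvectorBasis k i * hS.eigenvectorBasis k j) := by
  conv_lhs => rw [hS.spectral_theorem]
  simp only [Unitary.conjStarAlgAut_apply, Matrix.mul_apply, Matrix.star_apply,
    Matrix.IsHermitian.eigenvectorUnitary_apply, Matrix.diagonal_apply, mul_ite, mul_zero,
    Finset.sum_ite_eq', Finset.mem_univ, if_true, star_trivial, Function.comp,
    RCLike.ofReal_real_eq_id, id]
  exact Finset.sum_congr rfl fun k _ => by ring

private lemma mink_orth {n : ℕ} (S : Matrix (Fin n) (Fin n) ℝ) (hS : S.IsHermitian) (a b : Fin n) :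
    (∑ t, hS.eigenvectorBasis a t * hS.eigenvectorBasis b t) = if a = b then 1 else 0 := by
  have h := (orthonormal_iff_ite.mp hS.eigenvectorBasis.orthonormal) a b
  simpa [PiLp.inner_apply, RCLike.inner_apply, conj_trivial, mul_comm] using h

private lemma mink_quad {n d : ℕ} (S : Matrix (Fin n) (Fin n) ℝ)
    (p : Fin n → (Fin (d + 1) → ℝ)) (hEq : ∀ i j, S i j = minkowski d (p i) (p j))
    (x : Fin n → ℝ) :
    x ⬝ᵥ (S *ᵥ x) = minkowski d (fun m => ∑ t, x t * p t m) (fun m => ∑ t, x t * p t m) := by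
  simp only [dotProduct, mulVec, dotProduct, minkowski, hEq]
  rw [Finset.sum_mul_sum]
  have h1 : ∀ K : Fin d, (∑ t, x t * p t K.succ) * (∑ t, x t * p t K.succ)
      = ∑ i, ∑ j, (x i * p i K.succ) * (x j * p j K.succ) := fun K => Finset.sum_mul_sum _ _ _ _
  conv_rhs => rw [Finset.sum_congr rfl fun K _ => h1 K]
  have h2 : (∑ K : Fin d, ∑ i : Fin n, ∑ j : Fin n, (x i * p i K.succ) * (x j * p j K.succ))
      = ∑ i : Fin n, ∑ j : Fin n, ∑ K : Fin d, (x i * p i K.succ) * (x j * p j K.succ) := by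
    rw [Finset.sum_comm]
    exact Finset.sum_congr rfl fun i _ => Finset.sum_comm
  rw [h2]
  rw [← Finset.sum_sub_distrib]
  refine Finset.sum_congr rfl fun i _ => ?_
  rw [← Finset.sum_sub_distrib, Finset.mul_sum]
  refine Finset.sum_congr rfl fun j _ => ?_
  rw [sub_mul, mul_sub, Finset.sum_mul, Finset.mul_sum]
  congr 1
  · ring
  · exact Finset.sum_congr rfl fun k _ => by ring

/-- Lemma (Gram matrices of momentum vectors): a real symmetric `n × n` matrix `S` has all
diagonal entries nonnegative, at most one positive eigenvalue, and rank at most `1 + d`,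
if and only if `S` is the Gram matrix, with respect to the Minkowski inner product, of `n`
vectors `p⁽¹⁾,…,p⁽ⁿ⁾` in `ℝ^{1+d}` satisfying `p⁽ⁱ⁾·p⁽ⁱ⁾ ≥ 0`. -/
theorem mandelstam_iff_gram (n d : ℕ) (S : Matrix (Fin n) (Fin n) ℝ)
    (hS : S.IsHermitian) :
    ((∀ i, 0 ≤ S i i) ∧ Nat.card {i : Fin n // 0 < hS.eigenvalues i} ≤ 1 ∧
        S.rank ≤ 1 + d) ↔
      ∃ p : Fin n → (Fin (d + 1) → ℝ),
        (∀ i, 0 ≤ minkowski d (p i) (p i)) ∧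
        (∀ i j, S i j = minkowski d (p i) (p j)) := by
  classical
  constructor
  · rintro ⟨hdiag, hpos, hrank⟩
    by_cases hex : ∃ k, 0 < hS.eigenvalues k
    · obtain ⟨k₀, hk₀⟩ := hex
      -- uniqueness of the positive eigenvalue index
      have hsub : ∀ a b : {i : Fin n // 0 < hS.eigenvalues i}, a = b := by
        rw [Nat.card_eq_fintype_card, Fintype.card_le_one_iff] at hpos
        exact hpos
      have huniq : ∀ k, 0 < hS.eigenvalues k → k = k₀ := fun k hk =>
        congrArg Subtype.val (hsub ⟨k, hk⟩ ⟨k₀, hk₀⟩)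
      -- at most d negative eigenvalues
      have hcardneg : Fintype.card {k : Fin n // hS.eigenvalues k < 0} ≤ d := by
        have hr := hS.rank_eq_card_non_zero_eigs
        rw [hr] at hrank
        have hk0N : k₀ ∉ Finset.univ.filter (fun k => hS.eigenvalues k < 0) := by
          simp [not_lt.mpr hk₀.le]
        have hins : insert k₀ (Finset.univ.filter (fun k => hS.eigenvalues k < 0)) ⊆
            Finset.univ.filter (fun k => hS.eigenvalues k ≠ 0) := by
          intro k hk
          rcases Finset.mem_insert.mp hk with h | h
          · subst h; simp [hk₀.ne']
          · simp only [Finset.mem_filter, Finset.mem_univ, true_and] at h ⊢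
            exact h.ne
        have h1 := Finset.card_le_card hins
        rw [Finset.card_insert_of_notMem hk0N] at h1
        rw [Fintype.card_subtype] at hrank ⊢
        omega
      obtain ⟨e⟩ : Nonempty ({k : Fin n // hS.eigenvalues k < 0} ↪ Fin d) := by
        apply Function.Embedding.nonempty_of_card_le
        simpa using hcardneg
      -- construct the vectors
      set u : Fin n → Fin n → ℝ := fun k => ⇑(hS.eigenvectorBasis k) with hu
      have hueq : ∀ k t, u k t = hS.eigenvectorBasis k t := fun k t => rfl
      have hGram : ∀ i j, S i j = minkowski d
          (Fin.cons (Real.sqrt (hS.eigenvalues k₀) * u k₀ i)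
            (fun m => ∑ a : {k : Fin n // hS.eigenvalues k < 0},
              if e a = m then Real.sqrt (-hS.eigenvalues a.1) * u a.1 i else 0) :
              Fin (d+1) → ℝ)
          (Fin.cons (Real.sqrt (hS.eigenvalues k₀) * u k₀ j)
            (fun m => ∑ a : {k : Fin n // hS.eigenvalues k < 0},
              if e a = m then Real.sqrt (-hS.eigenvalues a.1) * u a.1 j else 0) :
              Fin (d+1) → ℝ) := by
        intro i j
        rw [mink_key S hS i j]
        simp only [minkowski, Fin.cons_zero, Fin.cons_succ]
        rw [mink_sum_embed e]
        simp only [hueq]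
        have hsplit : Finset.univ.filter (fun k => hS.eigenvalues k ≠ 0)
            = insert k₀ (Finset.univ.filter (fun k => hS.eigenvalues k < 0)) := by
          ext k
          simp only [Finset.mem_filter, Finset.mem_univ, true_and, Finset.mem_insert]
          constructor
          · intro h
            rcases (Ne.lt_or_gt h) with h' | h'
            · exact Or.inr h'
            · exact Or.inl (huniq k h')
          · rintro (h | h)
            · subst h; exact hk₀.ne'
            · exact h.ne
        have hk0N : k₀ ∉ Finset.univ.filter (fun k => hS.eigenvalues k < 0) := by
          simp [not_lt.mpr hk₀.le]
        rw [← Finset.sum_filter_of_ne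
          (p := fun k => hS.eigenvalues k ≠ 0)
          (f := fun k => hS.eigenvalues k * (hS.eigenvectorBasis k i * hS.eigenvectorBasis k j))
          (fun k _ hfk h0 => hfk (by simp [h0]))]
        rw [hsplit, Finset.sum_insert hk0N]
        rw [← Finset.sum_subtype (Finset.univ.filter (fun k => hS.eigenvalues k < 0))
          (fun k => by simp)
          (fun k => Real.sqrt (-hS.eigenvalues k) * hS.eigenvectorBasis k i *
            (Real.sqrt (-hS.eigenvalues k) * hS.eigenvectorBasis k j))]
        rw [sub_eq_add_neg, ← Finset.sum_neg_distrib]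
        congr 1
        · rw [show Real.sqrt (hS.eigenvalues k₀) * hS.eigenvectorBasis k₀ i *
              (Real.sqrt (hS.eigenvalues k₀) * hS.eigenvectorBasis k₀ j)
              = (Real.sqrt (hS.eigenvalues k₀) * Real.sqrt (hS.eigenvalues k₀)) *
                (hS.eigenvectorBasis k₀ i * hS.eigenvectorBasis k₀ j) by ring,
            Real.mul_self_sqrt hk₀.le]
        · refine Finset.sum_congr rfl fun k hk => ?_
          have hkneg : hS.eigenvalues k < 0 := by
            simpa using (Finset.mem_filter.mp hk).2
          have h : Real.sqrt (-hS.eigenvalues k) * Real.sqrt (-hS.eigenvalues k)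
              = -hS.eigenvalues k := Real.mul_self_sqrt (by linarith)
          rw [show Real.sqrt (-hS.eigenvalues k) * hS.eigenvectorBasis k i *
              (Real.sqrt (-hS.eigenvalues k) * hS.eigenvectorBasis k j)
              = (Real.sqrt (-hS.eigenvalues k) * Real.sqrt (-hS.eigenvalues k)) *
                (hS.eigenvectorBasis k i * hS.eigenvectorBasis k j) by ring, h]
          ring
      exact ⟨fun i => (Fin.cons (Real.sqrt (hS.eigenvalues k₀) * u k₀ i)
        (fun m => ∑ a : {k : Fin n // hS.eigenvalues k < 0},
          if e a = m then Real.sqrt (-hS.eigenvalues a.1) * u a.1 i else 0) :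
          Fin (d+1) → ℝ),
        fun i => le_of_le_of_eq (hdiag i) (hGram i i), hGram⟩
    · -- no positive eigenvalue: S = 0
      push_neg at hex
      have htr : ∑ i, S i i = ∑ k, hS.eigenvalues k := by
        have : ∀ i, S i i = ∑ k, hS.eigenvalues k *
            (hS.eigenvectorBasis k i * hS.eigenvectorBasis k i) := fun i => mink_key S hS i i
        rw [Finset.sum_congr rfl fun i _ => this i, Finset.sum_comm]
        refine Finset.sum_congr rfl fun k _ => ?_
        rw [← Finset.mul_sum, mink_orth S hS k k]
        simp
      have hsum0 : ∀ k ∈ Finset.univ, hS.eigenvalues k = 0 := by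
        have h1 : (0:ℝ) ≤ ∑ k, hS.eigenvalues k := htr ▸ Finset.sum_nonneg fun i _ => hdiag i
        have h2 : ∑ k, hS.eigenvalues k ≤ 0 := Finset.sum_nonpos fun k _ => hex k
        have h3 : ∑ k, hS.eigenvalues k = 0 := le_antisymm h2 h1
        exact (Finset.sum_eq_zero_iff_of_nonpos fun k _ => hex k).mp h3
      refine ⟨fun _ => 0, ?_, ?_⟩
      · intro i; simp [minkowski]
      · intro i j
        rw [mink_key S hS i j]
        simp only [minkowski, Pi.zero_apply, mul_zero, zero_mul, Finset.sum_const_zero, sub_zero]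
        exact Finset.sum_eq_zero fun k _ => by rw [hsum0 k (Finset.mem_univ k)]; ring
  · rintro ⟨p, hp, hEq⟩
    refine ⟨fun i => (hEq i i) ▸ hp i, ?_, ?_⟩
    · -- at most one positive eigenvalue
      rw [Nat.card_eq_fintype_card, Fintype.card_le_one_iff]
      intro a b
      by_contra hab
      have hij : (a : Fin n) ≠ (b : Fin n) := fun h => hab (Subtype.ext h)
      set vi : Fin n → ℝ := ⇑(hS.eigenvectorBasis a.1) with hvi
      set vj : Fin n → ℝ := ⇑(hS.eigenvectorBasis b.1) with hvj
      set a0 : ℝ := ∑ t, vi t * p t 0 with ha0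
      set b0 : ℝ := ∑ t, vj t * p t 0 with hb0
      obtain ⟨c, c', hcc, hz0⟩ : ∃ c c', ¬(c = 0 ∧ c' = 0) ∧ c * a0 + c' * b0 = 0 := by
        by_cases h : a0 = 0 ∧ b0 = 0
        · exact ⟨1, 0, by simp, by simp [h.1]⟩
        · refine ⟨b0, -a0, ?_, by ring⟩
          rintro ⟨h1, h2⟩
          exact h ⟨neg_eq_zero.mp h2, h1⟩
      set x : Fin n → ℝ := fun t => c * vi t + c' * vj t with hx
      have hA : x ⬝ᵥ (S *ᵥ x) = c^2 * hS.eigenvalues a.1 + c'^2 * hS.eigenvalues b.1 := by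
        have hxs : x = c • vi + c' • vj := rfl
        rw [hxs, Matrix.mulVec_add, Matrix.mulVec_smul, Matrix.mulVec_smul,
          hS.mulVec_eigenvectorBasis, hS.mulVec_eigenvectorBasis, ← hvi, ← hvj]
        simp only [add_dotProduct, dotProduct_add, smul_dotProduct,
          dotProduct_smul, smul_eq_mul]
        have o1 : vi ⬝ᵥ vi = 1 := by
          simpa [dotProduct, hvi] using mink_orth S hS a.1 a.1
        have o2 : vi ⬝ᵥ vj = 0 := by
          have := mink_orth S hS a.1 b.1
          simpa [dotProduct, hvi, hvj, hij] using this
        have o3 : vj ⬝ᵥ vi = 0 := by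
          have := mink_orth S hS b.1 a.1
          simpa [dotProduct, hvi, hvj, hij.symm] using this
        have o4 : vj ⬝ᵥ vj = 1 := by
          simpa [dotProduct, hvj] using mink_orth S hS b.1 b.1
        rw [o1, o2, o3, o4]
        ring
      have hA2 : x ⬝ᵥ (S *ᵥ x) ≤ 0 := by
        rw [mink_quad S p hEq x]
        have hz : (∑ t, x t * p t 0) = 0 := by
          rw [← hz0, ha0, hb0]
          rw [Finset.mul_sum, Finset.mul_sum, ← Finset.sum_add_distrib]
          exact Finset.sum_congr rfl fun t _ => by simp [hx]; ring
        rw [minkowski, hz]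
        simp only [zero_mul, zero_sub, neg_nonpos]
        exact Finset.sum_nonneg fun k _ => mul_self_nonneg _
      have hApos : 0 < x ⬝ᵥ (S *ᵥ x) := by
        rw [hA]
        rcases not_and_or.mp hcc with h | h
        · have : 0 < c^2 * hS.eigenvalues a.1 := mul_pos (by positivity) a.2
          have h2 : 0 ≤ c'^2 * hS.eigenvalues b.1 := mul_nonneg (sq_nonneg _) b.2.le
          linarith
        · have : 0 < c'^2 * hS.eigenvalues b.1 := mul_pos (by positivity) b.2
          have h2 : 0 ≤ c^2 * hS.eigenvalues a.1 := mul_nonneg (sq_nonneg _) a.2.le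
          linarith
      exact absurd hA2 (not_le.mpr hApos)
    · -- rank bound
      have hfac : S = (Matrix.of fun i m => (if m = (0 : Fin (d+1)) then (1:ℝ) else -1) * p i m) *
          (Matrix.of fun m j => p j m) := by
        ext i j
        rw [hEq i j]
        simp only [Matrix.mul_apply, Matrix.of_apply, minkowski]
        rw [Fin.sum_univ_succ]
        simp [Fin.succ_ne_zero, Finset.sum_neg_distrib]
        ring_nf
      rw [hfac]
      calc Matrix.rank _ ≤ _ := Matrix.rank_mul_le_left _ _
        _ ≤ Fintype.card (Fin (d+1)) := Matrix.rank_le_card_width _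
        _ = 1 + d := by simp [add_comm]
end

section
/- Let S = (s_ij) be a real symmetric n×n matrix with all diagonal entries nonnegative and at most one positive eigenvalue. Then for all pairwise distinct indices i, j, k one has s_ij·s_ik·s_jk ≥ 0. -/
open Matrix

/-- Quadratic form of a real symmetric matrix expanded in its eigenbasis. -/
lemma quadform_eigen_expand (n : ℕ) (S : Matrix (Fin n) (Fin n) ℝ) (hS : S.IsHermitian)
    (x : Fin n → ℝ) :
    x ⬝ᵥ (S *ᵥ x) = ∑ l, hS.eigenvalues l * (x ⬝ᵥ ⇑(hS.eigenvectorBasis l))^2 := by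
  conv_lhs => rw [hS.spectral_theorem, Unitary.conjStarAlgAut_apply]
  rw [← mulVec_mulVec, dotProduct_mulVec, ← vecMul_vecMul]
  have hy : x ᵥ* ↑(hS.eigenvectorUnitary) = star ↑(hS.eigenvectorUnitary : Matrix (Fin n) (Fin n) ℝ) *ᵥ x := by
    funext l
    simp [vecMul, mulVec, dotProduct, conjTranspose_apply, mul_comm]
  rw [hy]
  have hyl : ∀ l, (star (hS.eigenvectorUnitary : Matrix (Fin n) (Fin n) ℝ) *ᵥ x) l
      = x ⬝ᵥ ⇑(hS.eigenvectorBasis l) := by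
    intro l
    simp [mulVec, dotProduct, conjTranspose_apply, mul_comm]
  simp only [vecMul_diagonal, dotProduct, hyl, Function.comp_apply, RCLike.ofReal_real_eq_id, id]
  congr 1; funext l; ring

/-- If a real symmetric matrix has at most one positive eigenvalue, there is a vector `v`
such that the quadratic form is nonpositive on the orthogonal complement of `v`. -/
lemma exists_semi_vec (n : ℕ) (S : Matrix (Fin n) (Fin n) ℝ) (hS : S.IsHermitian)
    (hpos : Nat.card {i : Fin n // 0 < hS.eigenvalues i} ≤ 1) :
    ∃ v : Fin n → ℝ, ∀ x : Fin n → ℝ, x ⬝ᵥ v = 0 → x ⬝ᵥ (S *ᵥ x) ≤ 0 := by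
  have hsub : Subsingleton {i : Fin n // 0 < hS.eigenvalues i} := by
    rw [Nat.card_eq_fintype_card] at hpos
    exact Fintype.card_le_one_iff_subsingleton.mp hpos
  by_cases hex : ∃ l0 : Fin n, 0 < hS.eigenvalues l0
  · obtain ⟨l0, hl0⟩ := hex
    refine ⟨⇑(hS.eigenvectorBasis l0), fun x hx => ?_⟩
    rw [quadform_eigen_expand n S hS x]
    apply Finset.sum_nonpos
    intro l _
    by_cases hl : 0 < hS.eigenvalues l
    · have : l = l0 := congrArg Subtype.val (hsub.elim ⟨l, hl⟩ ⟨l0, hl0⟩)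
      rw [this, hx]
      simp
    · exact mul_nonpos_of_nonpos_of_nonneg (le_of_not_gt hl) (sq_nonneg _)
  · refine ⟨0, fun x _ => ?_⟩
    rw [quadform_eigen_expand n S hS x]
    apply Finset.sum_nonpos
    intro l _
    exact mul_nonpos_of_nonpos_of_nonneg (le_of_not_gt (fun h => hex ⟨l, h⟩)) (sq_nonneg _)

set_option maxHeartbeats 1000000 in
/-- If a real symmetric `n × n` matrix `S` has all diagonal entries nonnegative and at
most one positive eigenvalue, then `s_ij · s_ik · s_jk ≥ 0` for all pairwise distinct
indices `i, j, k`. -/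
theorem triple_product_nonneg (n : ℕ) (S : Matrix (Fin n) (Fin n) ℝ)
    (hS : S.IsHermitian) (hdiag : ∀ i, 0 ≤ S i i)
    (hpos : Nat.card {i : Fin n // 0 < hS.eigenvalues i} ≤ 1) :
    ∀ i j k : Fin n, i ≠ j → i ≠ k → j ≠ k → 0 ≤ S i j * S i k * S j k := by
  intro i j k hij hik hjk
  by_contra hcon
  push_neg at hcon
  obtain ⟨v, hv⟩ := exists_semi_vec n S hS hpos
  set p := S i j with hp
  set q := S i k with hq
  set r := S j k with hr
  have hpne : p ≠ 0 := by intro h; rw [h] at hcon; simp at hcon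
  have hqne : q ≠ 0 := by intro h; rw [h] at hcon; simp at hcon
  have hrne : r ≠ 0 := by intro h; rw [h] at hcon; simp at hcon
  set P := |p| with hP
  set Q := |q| with hQ
  set R := |r| with hR
  have hP0 : 0 < P := abs_pos.mpr hpne
  have hQ0 : 0 < Q := abs_pos.mpr hqne
  have hR0 : 0 < R := abs_pos.mpr hrne
  set δ2 : ℝ := if 0 < p then -1 else 1 with hδ2def
  set δ3 : ℝ := if 0 < q then -1 else 1 with hδ3def
  have hp2 : δ2 * p = -P := by
    rw [hδ2def, hP]
    rcases lt_or_gt_of_ne hpne with h | h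
    · rw [if_neg (not_lt.mpr h.le), abs_of_neg h]; ring
    · rw [if_pos h, abs_of_pos h]; ring
  have hq3 : δ3 * q = -Q := by
    rw [hδ3def, hQ]
    rcases lt_or_gt_of_ne hqne with h | h
    · rw [if_neg (not_lt.mpr h.le), abs_of_neg h]; ring
    · rw [if_pos h, abs_of_pos h]; ring
  have hδ2sq : δ2 * δ2 = 1 := by rw [hδ2def]; split <;> norm_num
  have hδ3sq : δ3 * δ3 = 1 := by rw [hδ3def]; split <;> norm_num
  have hr23 : δ2 * δ3 * r = -R := by
    have h1 : (δ2 * δ3 * r) * (P * Q) = p * q * r := by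
      have : (δ2 * δ3 * r) * ((δ2 * p) * (δ3 * q)) = (δ2*δ2) * (δ3*δ3) * (p*q*r) := by ring
      rw [hp2, hq3, hδ2sq, hδ3sq] at this
      linarith [this]
    have h2 : δ2 * δ3 * r < 0 := by
      have hPQ : 0 < P * Q := mul_pos hP0 hQ0
      nlinarith [hcon]
    have h3 : |δ2 * δ3 * r| = R := by
      rw [abs_mul, abs_mul, hR]
      have : |δ2| = 1 := by rw [hδ2def]; split <;> norm_num
      have h3' : |δ3| = 1 := by rw [hδ3def]; split <;> norm_num
      rw [this, h3']; ring
    rw [← h3, abs_of_neg h2]; ring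
  -- the plane coefficients
  set α := v i with hα
  set β := v j with hβ
  set γ := v k with hγ
  set m : ℝ := Q + R with hm
  set Lu : ℝ := α - δ2 * β with hLu
  set Lw : ℝ := m * α + m * δ2 * β - 2 * P * δ3 * γ with hLw
  -- choose (s,t)
  obtain ⟨s, t, hst, hL⟩ : ∃ s t : ℝ, ¬(s = 0 ∧ t = 0) ∧ s * Lu + t * Lw = 0 := by
    by_cases h : Lu = 0 ∧ Lw = 0
    · exact ⟨1, 0, by simp, by rw [h.1, h.2]; ring⟩
    · exact ⟨Lw, -Lu, fun ⟨h1, h2⟩ => h ⟨by linarith [neg_eq_zero.mp h2], h1⟩, by ring⟩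
  set A : ℝ := s + t * m with hA
  set B : ℝ := -s * δ2 + t * m * δ2 with hB
  set C : ℝ := t * (-2 * P * δ3) with hC
  -- quadratic form value is positive
  have hGval : p * A * B + q * A * C + r * B * C
      = P * ((s + (Q - R) * t)^2 + 4 * Q * R * t^2) := by
    rw [hA, hB, hC, hm]
    linear_combination ((s + t*(Q+R)) * (t*(Q+R) - s)) * hp2
      + (-2*P*t*(s + t*(Q+R))) * hq3 + (-2*P*t*(t*(Q+R) - s)) * hr23
  have hGpos : 0 < p * A * B + q * A * C + r * B * C := by
    rw [hGval]
    rcases eq_or_ne t 0 with ht | ht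
    · have hs : s ≠ 0 := fun h => hst ⟨h, ht⟩
      rw [ht]
      have hs2 : 0 < s^2 := by positivity
      nlinarith
    · have ht2 : 0 < t^2 := by positivity
      nlinarith [sq_nonneg (s + (Q - R) * t), mul_pos (mul_pos hQ0 hR0) ht2]
  -- the witness vector
  set x : Fin n → ℝ := fun l => if l = i then A else if l = j then B else if l = k then C else 0
    with hx
  have hxi : x i = A := by rw [hx]; simp
  have hxj : x j = B := by rw [hx]; simp [Ne.symm hij]
  have hxk : x k = C := by rw [hx]; simp [Ne.symm hik, Ne.symm hjk]
  have hsupp : ∀ l : Fin n, l ≠ i → l ≠ j → l ≠ k → x l = 0 := by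
    intro l h1 h2 h3
    rw [hx]; simp [h1, h2, h3]
  -- sum trick
  have hsum : ∀ w : Fin n → ℝ, x ⬝ᵥ w = A * w i + B * w j + C * w k := by
    intro w
    have : ∀ l, x l * w l = (if l = i then A * w i else 0) + (if l = j then B * w j else 0)
        + (if l = k then C * w k else 0) := by
      intro l
      by_cases h1 : l = i
      · subst h1
        rw [if_pos rfl, if_neg hij, if_neg hik, hxi]; ring
      · by_cases h2 : l = j
        · subst h2
          rw [if_neg h1, if_pos rfl, if_neg hjk, hxj]; ring
        · by_cases h3 : l = k
          · subst h3
            rw [if_neg h1, if_neg h2, if_pos rfl, hxk]; ring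
          · rw [if_neg h1, if_neg h2, if_neg h3, hsupp l h1 h2 h3]; ring
    rw [dotProduct]
    rw [Finset.sum_congr rfl (fun l _ => this l)]
    rw [Finset.sum_add_distrib, Finset.sum_add_distrib]
    simp [Finset.sum_ite_eq']
  -- orthogonality
  have hxv : x ⬝ᵥ v = 0 := by
    rw [hsum v, ← hα, ← hβ, ← hγ]
    have : A * α + B * β + C * γ = s * Lu + t * Lw := by
      rw [hA, hB, hC, hLu, hLw]; ring
    rw [this, hL]
  -- quadratic form
  have hquad : x ⬝ᵥ (S *ᵥ x) = A * (S i i * A + p * B + q * C)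
      + B * (p * A + S j j * B + r * C) + C * (q * A + r * B + S k k * C) := by
    rw [hsum (S *ᵥ x)]
    have hmv : ∀ l : Fin n, (S *ᵥ x) l = S l i * A + S l j * B + S l k * C := by
      intro l
      rw [mulVec, dotProduct_comm, hsum (fun m => S l m)]
      ring
    rw [hmv i, hmv j, hmv k, hp, hq, hr]
    have hji : S j i = S i j := (star_trivial _).symm.trans (hS.apply j i).symm
    have hki : S k i = S i k := (star_trivial _).symm.trans (hS.apply k i).symm
    have hkj : S k j = S j k := (star_trivial _).symm.trans (hS.apply k j).symm
    rw [hji, hki, hkj]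
  have hle : x ⬝ᵥ (S *ᵥ x) ≤ 0 := hv x hxv
  rw [hquad] at hle
  nlinarith [mul_nonneg (hdiag i) (sq_nonneg A), mul_nonneg (hdiag j) (sq_nonneg B),
    mul_nonneg (hdiag k) (sq_nonneg C), hGpos]
end

section
/- Let S = (s_ij) be a real symmetric n×n matrix with all diagonal entries nonnegative and at most one positive eigenvalue, and suppose s_ij ≠ 0 for all i ≠ j. Then there exists a sign vector σ : {1,…,n} → {−1,+1} such that s_ij·σ_i·σ_j > 0 for all i ≠ j; in other words, the sign of s_ij equals σ_i·σ_j for all i ≠ j. -/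
open Matrix

private lemma qf_spectral (n : ℕ) (S : Matrix (Fin n) (Fin n) ℝ) (hS : S.IsHermitian)
    (x : Fin n → ℝ) :
    x ⬝ᵥ S *ᵥ x = ∑ m, hS.eigenvalues m *
      ((star (hS.eigenvectorUnitary : Matrix (Fin n) (Fin n) ℝ) *ᵥ x) m)^2 := by
  set U := (hS.eigenvectorUnitary : Matrix (Fin n) (Fin n) ℝ) with hU
  conv_lhs => rw [hS.spectral_theorem, Unitary.conjStarAlgAut_apply]
  rw [← mulVec_mulVec, ← mulVec_mulVec, dotProduct_mulVec]
  have hsU : star U = Uᵀ := by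
    rw [star_eq_conjTranspose, conjTranspose_eq_transpose_of_trivial]
  rw [hsU]
  simp only [dotProduct, mulVec_diagonal, mulVec_transpose, Function.comp_apply,
    RCLike.ofReal_real_eq_id, id_eq]
  congr 1; ext m; ring

private lemma no_two_dim (n : ℕ) (S : Matrix (Fin n) (Fin n) ℝ) (hS : S.IsHermitian)
    (hpos : Nat.card {i : Fin n // 0 < hS.eigenvalues i} ≤ 1)
    (u v : Fin n → ℝ)
    (hq : ∀ α β : ℝ, ¬(α = 0 ∧ β = 0) →
      0 < (α • u + β • v) ⬝ᵥ S *ᵥ (α • u + β • v)) : False := by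
  set U := star (hS.eigenvectorUnitary : Matrix (Fin n) (Fin n) ℝ) with hU
  have key : ∀ x : Fin n → ℝ, x ⬝ᵥ S *ᵥ x = ∑ m, hS.eigenvalues m * ((U *ᵥ x) m)^2 :=
    fun x => qf_spectral n S hS x
  have hsub : ∀ m m' : Fin n, 0 < hS.eigenvalues m → 0 < hS.eigenvalues m' → m = m' := by
    intro m m' hm hm'
    have hcard : Fintype.card {i : Fin n // 0 < hS.eigenvalues i} ≤ 1 := by
      rwa [← Nat.card_eq_fintype_card]
    have := Fintype.card_le_one_iff.mp hcard ⟨m, hm⟩ ⟨m', hm'⟩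
    exact congrArg Subtype.val this
  by_cases hex : ∃ m0 : Fin n, 0 < hS.eigenvalues m0
  · obtain ⟨m0, hm0⟩ := hex
    have hqle : ∀ x : Fin n → ℝ, (U *ᵥ x) m0 = 0 → x ⬝ᵥ S *ᵥ x ≤ 0 := by
      intro x hx
      rw [key]
      apply Finset.sum_nonpos
      intro m _
      by_cases hm : m = m0
      · subst hm; rw [hx]; simp
      · have hle : hS.eigenvalues m ≤ 0 := by
          by_contra hgt
          exact hm (hsub m m0 (lt_of_not_ge hgt) hm0)
        exact mul_nonpos_of_nonpos_of_nonneg hle (sq_nonneg _)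
    have hlin : ∀ α β : ℝ, (U *ᵥ (α • u + β • v)) m0 = α * (U *ᵥ u) m0 + β * (U *ᵥ v) m0 := by
      intro α β
      simp [mulVec_add, mulVec_smul]
    by_cases h1 : (U *ᵥ u) m0 = 0
    · have hlt := hq 1 0 (by simp)
      have h2 : (U *ᵥ ((1:ℝ) • u + (0:ℝ) • v)) m0 = 0 := by rw [hlin]; simp [h1]
      exact absurd (hqle _ h2) (not_le.mpr hlt)
    · have hne : ¬((U *ᵥ v) m0 = 0 ∧ -(U *ᵥ u) m0 = 0) := by
        rintro ⟨-, h⟩; exact h1 (by linarith [neg_eq_zero.mp h])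
      have hlt := hq ((U *ᵥ v) m0) (-(U *ᵥ u) m0) hne
      have h2 : (U *ᵥ ((U *ᵥ v) m0 • u + (-(U *ᵥ u) m0) • v)) m0 = 0 := by
        rw [hlin]; ring
      exact absurd (hqle _ h2) (not_le.mpr hlt)
  · push_neg at hex
    have hlt := hq 1 0 (by simp)
    have hle : ((1:ℝ) • u + (0:ℝ) • v) ⬝ᵥ S *ᵥ ((1:ℝ) • u + (0:ℝ) • v) ≤ 0 := by
      rw [key]
      apply Finset.sum_nonpos
      intro m _
      exact mul_nonpos_of_nonpos_of_nonneg (hex m) (sq_nonneg _)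
    exact absurd hle (not_le.mpr hlt)

private lemma quad_pos (P d2 e3 f α β : ℝ) (hP : 0 < P) (hd2 : 0 ≤ d2) (he3 : 0 ≤ e3)
    (hf : f < 0) (hbig : f^2 < P*(d2+e3-2*f)) (hαβ : ¬(α = 0 ∧ β = 0)) :
    0 < α^2*(P+d2) + α*β*(2*(P+f)) + β^2*(P+e3) := by
  by_cases hβ : β = 0
  · have hα : α ≠ 0 := fun h => hαβ ⟨h, hβ⟩
    have hα2 : 0 < α^2 := by positivity
    subst hβ
    nlinarith
  · have hdisc : 0 < (P+d2)*(P+e3) - (P+f)^2 := by nlinarith [mul_nonneg hd2 he3]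
    have hβ2 : 0 < β^2 := by positivity
    nlinarith [sq_nonneg (α*(P+d2)+β*(P+f)), mul_pos hβ2 hdisc]

private lemma triple_pos (n : ℕ) (S : Matrix (Fin n) (Fin n) ℝ) (hS : S.IsHermitian)
    (hdiag : ∀ i, 0 ≤ S i i)
    (hpos : Nat.card {i : Fin n // 0 < hS.eigenvalues i} ≤ 1)
    (hnz : ∀ i j : Fin n, i ≠ j → S i j ≠ 0)
    (i j k : Fin n) (hij : i ≠ j) (hik : i ≠ k) (hjk : j ≠ k) :
    0 < S i j * S i k * S j k := by
  have hsymm : ∀ p q : Fin n, S q p = S p q := by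
    intro p q
    have h := hS.apply p q
    rwa [star_trivial] at h
  by_contra hle
  push_neg at hle
  have hcne : S i j ≠ 0 := hnz i j hij
  have hbne : S i k ≠ 0 := hnz i k hik
  have habc : S i j * S i k * S j k < 0 :=
    lt_of_le_of_ne hle (by
      intro h
      rcases mul_eq_zero.mp h with h' | h'
      · rcases mul_eq_zero.mp h' with h'' | h''
        · exact hcne h''
        · exact hbne h''
      · exact hnz j k hjk h')
  obtain ⟨ε, hε⟩ : ∃ ε : ℝ, ε = if 0 < S i j then 1 else -1 := ⟨_, rfl⟩
  obtain ⟨δ, hδ⟩ : ∃ δ : ℝ, δ = if 0 < S i k then 1 else -1 := ⟨_, rfl⟩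
  have hcε : S i j * ε = |S i j| := by
    rw [hε]; split_ifs with h
    · rw [mul_one, abs_of_pos h]
    · rw [abs_of_neg (lt_of_le_of_ne (not_lt.mp h) hcne)]; ring
  have hbδ : S i k * δ = |S i k| := by
    rw [hδ]; split_ifs with h
    · rw [mul_one, abs_of_pos h]
    · rw [abs_of_neg (lt_of_le_of_ne (not_lt.mp h) hbne)]; ring
  have hε2 : ε * ε = 1 := by rw [hε]; split_ifs <;> norm_num
  have hδ2 : δ * δ = 1 := by rw [hδ]; split_ifs <;> norm_num
  have hcabs : 0 < |S i j| := abs_pos.mpr hcne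
  have hbabs : 0 < |S i k| := abs_pos.mpr hbne
  obtain ⟨s, hs⟩ : ∃ s : ℝ, s = |S i j| / |S i k| := ⟨_, rfl⟩
  have hspos : 0 < s := hs ▸ div_pos hcabs hbabs
  have hsb : |S i k| * s = |S i j| := by rw [hs]; field_simp
  obtain ⟨f, hf⟩ : ∃ f : ℝ, f = s * (S j k * ε * δ) := ⟨_, rfl⟩
  have haεδ : S j k * ε * δ < 0 := by
    have h1 : (S j k * ε * δ) * (|S i j| * |S i k|) =
        S i j * S i k * S j k * ((ε * ε) * (δ * δ)) := by
      rw [← hcε, ← hbδ]; ring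
    rw [hε2, hδ2, mul_one] at h1
    nlinarith [mul_pos hcabs hbabs]
  have hfneg : f < 0 := hf ▸ mul_neg_of_pos_of_neg hspos haεδ
  obtain ⟨d1, hd1⟩ : ∃ d1 : ℝ, d1 = S i i := ⟨_, rfl⟩
  obtain ⟨d2, hd2⟩ : ∃ d2 : ℝ, d2 = S j j := ⟨_, rfl⟩
  obtain ⟨e3, he3⟩ : ∃ e3 : ℝ, e3 = S k k * s^2 := ⟨_, rfl⟩
  have hd1n : 0 ≤ d1 := hd1 ▸ hdiag i
  have hd2n : 0 ≤ d2 := hd2 ▸ hdiag j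
  have he3n : 0 ≤ e3 := he3 ▸ mul_nonneg (hdiag k) (sq_nonneg s)
  have hden : 0 < d2 + e3 - 2 * f := by linarith
  obtain ⟨t, htpos, hPbig'⟩ : ∃ t : ℝ, 0 < t ∧
      f^2 < (2 * |S i j| * t) * (d2 + e3 - 2*f) := by
    refine ⟨f^2 / (2 * |S i j| * (d2 + e3 - 2*f)) + 1, ?_, ?_⟩
    · have h0 : 0 ≤ f^2 / (2 * |S i j| * (d2 + e3 - 2*f)) :=
        div_nonneg (sq_nonneg f) (by positivity)
      linarith
    · have h1 : 2 * |S i j| * (f^2 / (2 * |S i j| * (d2 + e3 - 2*f)) + 1) * (d2 + e3 - 2*f) =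
          f^2 / (2 * |S i j| * (d2 + e3 - 2*f)) * (2 * |S i j| * (d2 + e3 - 2*f))
            + 2 * |S i j| * (d2 + e3 - 2*f) := by ring
      rw [div_mul_cancel₀ _ (by positivity)] at h1
      rw [h1]
      nlinarith [mul_pos (mul_pos two_pos hcabs) hden]
  obtain ⟨P, hP⟩ : ∃ P : ℝ, P = d1 * t^2 + 2 * |S i j| * t := ⟨_, rfl⟩
  have hPpos : 0 < P := by rw [hP]; nlinarith [sq_nonneg t]
  have hPbig : f^2 < P * (d2 + e3 - 2*f) := by
    rw [hP]
    nlinarith [mul_nonneg (mul_nonneg hd1n (sq_nonneg t)) hden.le]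
  -- bilinear expansion on a pair of basis vectors
  have hexp : ∀ (p q r w : Fin n) (x y x' y' : ℝ),
      (x • (Pi.single p 1 : Fin n → ℝ) + y • (Pi.single q 1 : Fin n → ℝ)) ⬝ᵥ
        S *ᵥ (x' • (Pi.single r 1 : Fin n → ℝ) + y' • (Pi.single w 1 : Fin n → ℝ))
      = x * S p r * x' + x * S p w * y' + y * S q r * x' + y * S q w * y' := by
    have hBs : ∀ (p q : Fin n) (x y : ℝ),
        (x • (Pi.single p 1 : Fin n → ℝ)) ⬝ᵥ S *ᵥ (y • (Pi.single q 1 : Fin n → ℝ))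
          = x * S p q * y := by
      intro p q x y
      rw [smul_dotProduct, mulVec_smul, dotProduct_smul, mulVec_single, single_dotProduct]
      simp; ring
    intro p q r w x y x' y'
    rw [add_dotProduct, mulVec_add, dotProduct_add, dotProduct_add, hBs, hBs, hBs, hBs]
    ring
  obtain ⟨u, hu⟩ : ∃ u : Fin n → ℝ,
      u = t • (Pi.single i 1 : Fin n → ℝ) + ε • (Pi.single j 1 : Fin n → ℝ) := ⟨_, rfl⟩
  obtain ⟨v, hv⟩ : ∃ v : Fin n → ℝ,
      v = t • (Pi.single i 1 : Fin n → ℝ) + (s * δ) • (Pi.single k 1 : Fin n → ℝ) := ⟨_, rfl⟩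
  have hqu : u ⬝ᵥ S *ᵥ u = P + d2 := by
    rw [hu, hexp, hsymm i j, ← hd1, ← hd2, hP]
    linear_combination (2*t)*hcε + d2*hε2
  have hqv : v ⬝ᵥ S *ᵥ v = P + e3 := by
    rw [hv, hexp, hsymm i k, ← hd1, hP, he3]
    linear_combination (2*t*s)*hbδ + (2*t)*hsb + (S k k * s^2)*hδ2
  have hBuv : u ⬝ᵥ S *ᵥ v = P + f := by
    rw [hu, hv, hexp, hsymm i j, ← hd1, hP, hf]
    linear_combination (t*s)*hbδ + t*hsb + t*hcε
  have hBvu : v ⬝ᵥ S *ᵥ u = P + f := by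
    rw [hv, hu, hexp, hsymm i k, hsymm j k, ← hd1, hP, hf]
    linear_combination t*hcε + (t*s)*hbδ + t*hsb
  apply no_two_dim n S hS hpos u v
  intro α β hαβ
  have hquad : (α • u + β • v) ⬝ᵥ S *ᵥ (α • u + β • v)
      = α^2*(P+d2) + α*β*(2*(P+f)) + β^2*(P+e3) := by
    simp only [add_dotProduct, dotProduct_add, mulVec_add, mulVec_smul, smul_dotProduct,
      dotProduct_smul, smul_eq_mul, hqu, hqv, hBuv, hBvu]
    ring
  rw [hquad]
  exact quad_pos P d2 e3 f α β hPpos hd2n he3n hfneg hPbig hαβ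

/-- If a real symmetric `n × n` matrix `S` has all diagonal entries nonnegative, at most
one positive eigenvalue, and no zero off-diagonal entries, then there is a sign vector
`σ : {1,…,n} → {−1,+1}` with `s_ij · σ_i · σ_j > 0` for all `i ≠ j`. -/
theorem exists_sign_vector (n : ℕ) (S : Matrix (Fin n) (Fin n) ℝ)
    (hS : S.IsHermitian) (hdiag : ∀ i, 0 ≤ S i i)
    (hpos : Nat.card {i : Fin n // 0 < hS.eigenvalues i} ≤ 1)
    (hnz : ∀ i j : Fin n, i ≠ j → S i j ≠ 0) :
    ∃ σ : Fin n → ℝ, (∀ i, σ i = 1 ∨ σ i = -1) ∧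
      ∀ i j : Fin n, i ≠ j → 0 < S i j * σ i * σ j := by
  have hsymm : ∀ p q : Fin n, S q p = S p q := by
    intro p q
    have h := hS.apply p q
    rwa [star_trivial] at h
  rcases Nat.eq_zero_or_pos n with hn | hn
  · refine ⟨fun _ => 1, fun i => Or.inl rfl, fun i j hij => ?_⟩
    exact absurd i.isLt (by omega)
  · obtain ⟨i0, hi0⟩ : ∃ i0 : Fin n, i0 = ⟨0, hn⟩ := ⟨_, rfl⟩
    refine ⟨fun i => if i = i0 then 1 else if 0 < S i0 i then 1 else -1, ?_, ?_⟩
    · intro i; dsimp only; split_ifs <;> simp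
    · intro i j hij
      dsimp only
      by_cases hi : i = i0
      · have hj : j ≠ i0 := fun h => hij (hi.trans h.symm)
        have hij' : i0 ≠ j := by rw [← hi]; exact hij
        rw [if_pos hi, if_neg hj, hi]
        rcases (hnz i0 j hij').lt_or_gt with h | h
        · rw [if_neg (not_lt.mpr h.le)]; nlinarith
        · rw [if_pos h]; nlinarith
      · by_cases hj : j = i0
        · have hi0i : i0 ≠ i := fun h => hi h.symm
          rw [if_pos hj, if_neg hi, hj, hsymm i0 i]
          rcases (hnz i0 i hi0i).lt_or_gt with h | h
          · rw [if_neg (not_lt.mpr h.le)]; nlinarith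
          · rw [if_pos h]; nlinarith
        · have h3 := triple_pos n S hS hdiag hpos hnz i0 i j
            (fun h => hi h.symm) (fun h => hj h.symm) hij
          rw [if_neg hi, if_neg hj]
          rcases (hnz i0 i (fun h => hi h.symm)).lt_or_gt with h1 | h1 <;>
            rcases (hnz i0 j (fun h => hj h.symm)).lt_or_gt with h2 | h2
          · rw [if_neg (not_lt.mpr h1.le), if_neg (not_lt.mpr h2.le)]
            nlinarith [mul_pos_of_neg_of_neg h1 h2]
          · rw [if_neg (not_lt.mpr h1.le), if_pos h2]
            nlinarith [mul_neg_of_neg_of_pos h1 h2]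
          · rw [if_pos h1, if_neg (not_lt.mpr h2.le)]
            nlinarith [mul_neg_of_pos_of_neg h1 h2]
          · rw [if_pos h1, if_pos h2]
            nlinarith [mul_pos h1 h2]
end

section
/- Let S = (s_ij) be a real symmetric n×n matrix with all diagonal entries equal to zero and at most one positive eigenvalue. If s_ij = 0 for some indices i ≠ j, then s_ik·s_jl = s_il·s_jk for all indices k and l. -/
open Matrix

lemma aux_rank_one (n : ℕ) (S : Matrix (Fin n) (Fin n) ℝ) (w : Fin n → ℝ)
    (B : Fin n → Fin n → ℝ)
    (hrep : ∀ a b, S a b = w a * w b - ∑ m, B m a * B m b)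
    (hdiag : ∀ a, S a a = 0) (i j : Fin n) (hzero : S i j = 0) (k l : Fin n) :
    S i k * S j l = S i l * S j k := by
  set P : Fin n → Fin n → ℝ := fun a b => ∑ m, B m a * B m b with hP
  have hPrep : ∀ a b, S a b = w a * w b - P a b := hrep
  have hPii : P i i = w i * w i := by have h1 := hPrep i i; have h2 := hdiag i; linarith
  have hPjj : P j j = w j * w j := by have h1 := hPrep j j; have h2 := hdiag j; linarith
  have hPij : P i j = w i * w j := by have h1 := hPrep i j; linarith [hzero]
  have hsum0 : ∑ m, (w j * B m i - w i * B m j) ^ 2 = 0 := by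
    have hexp : ∀ m : Fin n, (w j * B m i - w i * B m j) ^ 2 =
        w j ^ 2 * (B m i * B m i) - (2 * w i * w j) * (B m i * B m j)
          + w i ^ 2 * (B m j * B m j) := fun m => by ring
    rw [Finset.sum_congr rfl fun m _ => hexp m]
    rw [Finset.sum_add_distrib, Finset.sum_sub_distrib, ← Finset.mul_sum, ← Finset.mul_sum,
      ← Finset.mul_sum]
    have e1 : ∑ m, B m i * B m i = w i * w i := hPii
    have e2 : ∑ m, B m i * B m j = w i * w j := hPij
    have e3 : ∑ m, B m j * B m j = w j * w j := hPjj
    rw [e1, e2, e3]; ring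
  have hterm : ∀ m : Fin n, w j * B m i = w i * B m j := by
    intro m
    have h := (Finset.sum_eq_zero_iff_of_nonneg (fun m _ => sq_nonneg _)).mp hsum0 m
      (Finset.mem_univ m)
    have := pow_eq_zero_iff (n := 2) (by norm_num) |>.mp h
    linarith
  have hkey : ∀ a, w j * P i a = w i * P j a := by
    intro a
    simp only [hP, Finset.mul_sum]
    refine Finset.sum_congr rfl fun m _ => ?_
    linear_combination B m a * hterm m
  have main : (w i ≠ 0 ∨ w j ≠ 0) → S i k * S j l = S i l * S j k := by
    intro hne
    have hk := hkey k
    have hl := hkey l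
    have hP2 : P i k * P j l = P i l * P j k := by
      rcases hne with hwi | hwj
      · apply mul_left_cancel₀ hwi
        linear_combination P i l * hk - P i k * hl
      · apply mul_left_cancel₀ hwj
        linear_combination P j l * hk - P j k * hl
    rw [hPrep i k, hPrep j l, hPrep i l, hPrep j k]
    linear_combination hP2 - w l * hk + w k * hl
  by_cases hwi : w i = 0
  · by_cases hwj : w j = 0
    · have hBi : ∀ m, B m i = 0 := by
        intro m
        have h0 : P i i = 0 := by rw [hPii, hwi]; ring
        have h0' : ∑ m, B m i * B m i = 0 := h0
        have h := (Finset.sum_eq_zero_iff_of_nonneg (fun m _ => mul_self_nonneg _)).mp h0' m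
          (Finset.mem_univ m)
        exact mul_self_eq_zero.mp h
      have hSia : ∀ a, S i a = 0 := by
        intro a
        rw [hPrep, hwi]
        have : P i a = 0 := Finset.sum_eq_zero fun m _ => by rw [hBi m, zero_mul]
        rw [this]; ring
      rw [hSia k, hSia l, zero_mul, zero_mul]
    · exact main (Or.inr hwj)
  · exact main (Or.inl hwi)

/-- If a real symmetric `n × n` matrix `S` has all diagonal entries zero and at most one
positive eigenvalue, and `s_ij = 0` for some `i ≠ j`, then `s_ik·s_jl = s_il·s_jk` for all
`k, l`. -/
theorem rank_one_blocks (n : ℕ) (S : Matrix (Fin n) (Fin n) ℝ)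
    (hS : S.IsHermitian) (hdiag : ∀ i, S i i = 0)
    (hpos : Nat.card {i : Fin n // 0 < hS.eigenvalues i} ≤ 1)
    (i j : Fin n) (hij : i ≠ j) (hzero : S i j = 0) :
    ∀ k l : Fin n, S i k * S j l = S i l * S j k := by
  intro k l
  set lam := hS.eigenvalues with hlam
  set U : Fin n → Fin n → ℝ := fun a m => hS.eigenvectorBasis m a with hU
  have hrep0 : ∀ a b, S a b = ∑ m, lam m * U a m * U b m := by
    intro a b
    conv_lhs => rw [hS.spectral_theorem]
    simp [mul_apply, diagonal_apply, Finset.sum_ite_eq, star_apply, hU]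
    exact Finset.sum_congr rfl fun m _ => by ring
  have hsub : ∀ p q : Fin n, 0 < lam p → 0 < lam q → p = q := by
    intro p q hp hq
    have hss : Subsingleton {i : Fin n // 0 < hS.eigenvalues i} :=
      Finite.card_le_one_iff_subsingleton.mp hpos
    have := @Subsingleton.elim _ hss ⟨p, hp⟩ ⟨q, hq⟩
    exact congrArg Subtype.val this
  by_cases hex : ∃ p, 0 < lam p
  · obtain ⟨p, hp⟩ := hex
    set w : Fin n → ℝ := fun a => Real.sqrt (lam p) * U a p with hw
    set B : Fin n → Fin n → ℝ := fun m a =>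
      if m = p then 0 else Real.sqrt (-lam m) * U a m with hB
    have hrep : ∀ a b, S a b = w a * w b - ∑ m, B m a * B m b := by
      intro a b
      rw [hrep0 a b]
      have key : ∀ m : Fin n, lam m * U a m * U b m =
          (if m = p then w a * w b else 0) - B m a * B m b := by
        intro m
        by_cases hm : m = p
        · subst hm
          have hs : Real.sqrt (lam m) * Real.sqrt (lam m) = lam m :=
            Real.mul_self_sqrt hp.le
          simp only [hB, hw, if_pos rfl, eq_self_iff_true, if_true, mul_zero, sub_zero]
          first
          | linear_combination (U a m * U b m) * hs
          | linear_combination (-(U a m * U b m)) * hs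
        · have hle : lam m ≤ 0 := by
            by_contra hpos'
            exact hm (hsub m p (lt_of_not_ge hpos') hp)
          have hs : Real.sqrt (-lam m) * Real.sqrt (-lam m) = -lam m :=
            Real.mul_self_sqrt (by linarith)
          simp only [hB, if_neg hm]
          first
          | linear_combination (U a m * U b m) * hs
          | linear_combination (-(U a m * U b m)) * hs
      rw [Finset.sum_congr rfl fun m _ => key m, Finset.sum_sub_distrib,
        Finset.sum_ite_eq' Finset.univ p, if_pos (Finset.mem_univ p)]
    exact aux_rank_one n S w B hrep hdiag i j hzero k l
  · push_neg at hex
    set B : Fin n → Fin n → ℝ := fun m a => Real.sqrt (-lam m) * U a m with hB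
    have hrep : ∀ a b, S a b = (fun _ : Fin n => (0:ℝ)) a * (fun _ : Fin n => (0:ℝ)) b
        - ∑ m, B m a * B m b := by
      intro a b
      rw [hrep0 a b]
      simp only [zero_mul, zero_sub, ← Finset.sum_neg_distrib]
      refine Finset.sum_congr rfl fun m _ => ?_
      have hle : lam m ≤ 0 := hex m
      have hs : Real.sqrt (-lam m) * Real.sqrt (-lam m) = -lam m :=
        Real.mul_self_sqrt (by linarith)
      simp only [hB]
      first
      | linear_combination (U a m * U b m) * hs
      | linear_combination (-(U a m * U b m)) * hs
    exact aux_rank_one n S (fun _ => 0) B hrep hdiag i j hzero k l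
end

section
/- Let S = (s_ij) be a real symmetric n×n matrix with all diagonal entries equal to zero and at most one positive eigenvalue, and let N = { i : the i-th row of S is not the zero vector }. Then: (a) the relation on N defined by i ~ j if and only if (i = j or s_ij = 0) is an equivalence relation on N; and (b) there exists a sign vector σ : {1,…,n} → {−1,+1} such that s_ij·σ_i·σ_j > 0 for all indices i, j with s_ij ≠ 0. -/
open Matrix

noncomputable def auxSgn (t : ℝ) : ℝ := if 0 < t then 1 else -1

theorem auxSgn_or (t : ℝ) : auxSgn t = 1 ∨ auxSgn t = -1 := by
  unfold auxSgn; split_ifs <;> simp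

theorem auxSgn_sq (t : ℝ) : auxSgn t * auxSgn t = 1 := by
  unfold auxSgn; split_ifs <;> norm_num

theorem auxSgn_pos {t : ℝ} (h : t ≠ 0) : 0 < t * auxSgn t := by
  unfold auxSgn
  rcases lt_trichotomy t 0 with h1 | h1 | h1
  · rw [if_neg (by linarith)]; nlinarith
  · exact absurd h1 h
  · rw [if_pos h1]; nlinarith

theorem auxStep (t w : ℝ) (h : 0 < t * w) : 0 < t * auxSgn w := by
  unfold auxSgn
  split_ifs with h1
  · nlinarith
  · push_neg at h1
    nlinarith

theorem auxHelper2 (T w1 w2 : ℝ) (h : 0 < T * w1 * w2) :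
    0 < T * auxSgn w1 * auxSgn w2 := by
  have s1 : 0 < (T * w2) * auxSgn w1 := auxStep _ _ (by nlinarith)
  have s2 : 0 < (T * auxSgn w1) * auxSgn w2 := auxStep _ _ (by nlinarith [s1])
  nlinarith [s2]

theorem auxHelper3 (T w1 w2 w3 : ℝ) (h : 0 < T * w1 * w2 * w3) :
    0 < T * (auxSgn w1 * auxSgn w2) * auxSgn w3 := by
  have s1 : 0 < (T * w2 * w3) * auxSgn w1 := auxStep _ _ (by nlinarith)
  have s2 : 0 < (T * auxSgn w1 * w3) * auxSgn w2 := auxStep _ _ (by nlinarith [s1])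
  have s3 : 0 < (T * auxSgn w1 * auxSgn w2) * auxSgn w3 := auxStep _ _ (by nlinarith [s2])
  nlinarith [s3]

theorem myRepr {n : ℕ} (S : Matrix (Fin n) (Fin n) ℝ) (hS : S.IsHermitian) (u v : Fin n → ℝ) :
    u ⬝ᵥ S *ᵥ v = ∑ m, hS.eigenvalues m *
      ((u ᵥ* (hS.eigenvectorUnitary : Matrix (Fin n) (Fin n) ℝ)) m *
       (v ᵥ* (hS.eigenvectorUnitary : Matrix (Fin n) (Fin n) ℝ)) m) := by
  set U := (hS.eigenvectorUnitary : Matrix (Fin n) (Fin n) ℝ) with hU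
  have hstar : star U = Uᵀ := rfl
  conv_lhs => rw [hS.spectral_theorem]
  rw [Unitary.conjStarAlgAut_apply, dotProduct_mulVec, hstar, ← vecMul_vecMul, ← vecMul_vecMul]
  rw [show ∀ z : Fin n → ℝ, (z ᵥ* Uᵀ) ⬝ᵥ v = z ⬝ᵥ (v ᵥ* U) from fun z => by
    rw [vecMul_transpose, dotProduct_comm, dotProduct_mulVec, dotProduct_comm]]
  simp only [dotProduct, vecMul_diagonal]
  exact Finset.sum_congr rfl fun m _ => by simp [RCLike.ofReal_real_eq_id]; ring

theorem myArith (X Y Bv a b : ℝ) (hx : 0 < X) (hy : 0 < Y) (hB : Bv ^ 2 < X * Y)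
    (ha0 : a ≠ 0) (hb0 : b ≠ 0)
    (hz : b ^ 2 * X - 2 * a * b * Bv + a ^ 2 * Y ≤ 0) : False := by
  have ha2 : 0 < a ^ 2 := by positivity
  have hb2 : 0 < b ^ 2 := by positivity
  have hP : 0 < b ^ 2 * X + a ^ 2 * Y := by positivity
  have h2 : b ^ 2 * X + a ^ 2 * Y ≤ 2 * (a * b) * Bv := by linarith
  have h3 : (b ^ 2 * X + a ^ 2 * Y) * (b ^ 2 * X + a ^ 2 * Y)
      ≤ (2 * (a * b) * Bv) * (2 * (a * b) * Bv) :=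
    mul_self_le_mul_self hP.le h2
  have h4 : 4 * (a * b) ^ 2 * (X * Y) ≤ (b ^ 2 * X + a ^ 2 * Y) * (b ^ 2 * X + a ^ 2 * Y) := by
    nlinarith [sq_nonneg (b ^ 2 * X - a ^ 2 * Y)]
  have hab2 : 0 < (a * b) ^ 2 := by positivity
  have h5 : 4 * (a * b) ^ 2 * (Bv ^ 2) < 4 * (a * b) ^ 2 * (X * Y) := by
    apply mul_lt_mul_of_pos_left hB; positivity
  nlinarith

theorem myTool {n : ℕ} (S : Matrix (Fin n) (Fin n) ℝ) (hS : S.IsHermitian)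
    (hpos : Nat.card {i : Fin n // 0 < hS.eigenvalues i} ≤ 1) (x y : Fin n → ℝ)
    (hx : 0 < x ⬝ᵥ S *ᵥ x) (hy : 0 < y ⬝ᵥ S *ᵥ y)
    (hB : (x ⬝ᵥ S *ᵥ y) ^ 2 < (x ⬝ᵥ S *ᵥ x) * (y ⬝ᵥ S *ᵥ y)) : False := by
  set U := (hS.eigenvectorUnitary : Matrix (Fin n) (Fin n) ℝ) with hU
  set lam := hS.eigenvalues with hlam
  have hsub : Subsingleton {i : Fin n // 0 < lam i} := by
    rw [← not_nontrivial_iff_subsingleton]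
    intro hcon
    have := Finite.one_lt_card_iff_nontrivial.mpr hcon
    omega
  -- case 1 : all eigenvalues nonpositive
  by_cases hk : ∃ k, 0 < lam k
  · obtain ⟨k, hkpos⟩ := hk
    have honly : ∀ m, m ≠ k → lam m ≤ 0 := by
      intro m hm
      by_contra hmm
      push_neg at hmm
      exact hm (congrArg Subtype.val (hsub.elim ⟨m, hmm⟩ ⟨k, hkpos⟩))
    -- bound: for any u, u ⬝ᵥ S *ᵥ u ≤ lam k * (wu k)^2
    have hbound : ∀ u : Fin n → ℝ, u ⬝ᵥ S *ᵥ u ≤ lam k * ((u ᵥ* U) k) ^ 2 := by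
      intro u
      rw [myRepr S hS u u]
      calc ∑ m, lam m * ((u ᵥ* U) m * (u ᵥ* U) m)
          ≤ ∑ m, (if m = k then lam k * ((u ᵥ* U) k) ^ 2 else 0) := by
            apply Finset.sum_le_sum
            intro m _
            by_cases hmk : m = k
            · subst hmk; simp [sq]
            · simp only [hmk, if_false]
              have := honly m hmk
              nlinarith [sq_nonneg ((u ᵥ* U) m)]
        _ = lam k * ((u ᵥ* U) k) ^ 2 := by simp
    set a := (x ᵥ* U) k with ha
    set b := (y ᵥ* U) k with hb
    have ha0 : a ≠ 0 := by
      intro h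
      have := hbound x
      rw [← ha, h] at this
      simp at this
      linarith
    have hb0 : b ≠ 0 := by
      intro h
      have := hbound y
      rw [← hb, h] at this
      simp at this
      linarith
    -- z = b • x - a • y
    have hzk : ((b • x - a • y) ᵥ* U) k = 0 := by
      simp only [sub_vecMul, smul_vecMul, Pi.sub_apply, Pi.smul_apply, smul_eq_mul, ← ha, ← hb]
      ring
    have hzle : (b • x - a • y) ⬝ᵥ S *ᵥ (b • x - a • y) ≤ 0 := by
      have := hbound (b • x - a • y)
      rw [hzk] at this
      simpa using this
    have hexp : (b • x - a • y) ⬝ᵥ S *ᵥ (b • x - a • y)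
        = b ^ 2 * (x ⬝ᵥ S *ᵥ x) - 2 * a * b * (x ⬝ᵥ S *ᵥ y) + a ^ 2 * (y ⬝ᵥ S *ᵥ y) := by
      have hT : Sᵀ = S := by
        ext i j
        have := congrFun (congrFun hS.eq i) j
        simpa using this
      have hsymm : y ⬝ᵥ S *ᵥ x = x ⬝ᵥ S *ᵥ y := by
        rw [dotProduct_mulVec, show y ᵥ* S = S *ᵥ y from by
          conv_rhs => rw [← hT]
          rw [mulVec_transpose], dotProduct_comm]
      simp [dotProduct_sub, sub_dotProduct, smul_dotProduct, dotProduct_smul, mulVec_sub,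
        mulVec_smul, hsymm]
      ring
    exact myArith _ _ _ a b hx hy hB ha0 hb0 (by rw [hexp] at hzle; linarith)
  · push_neg at hk
    have : x ⬝ᵥ S *ᵥ x ≤ 0 := by
      rw [myRepr S hS x x]
      apply Finset.sum_nonpos
      intro m _
      exact mul_nonpos_of_nonpos_of_nonneg (hk m) (mul_self_nonneg _)
    linarith

theorem expand4 {n : ℕ} (S : Matrix (Fin n) (Fin n) ℝ) (i j k l : Fin n) (a b c d a' b' c' d' : ℝ) :
    (Pi.single i a + Pi.single j b + Pi.single k c + Pi.single l d) ⬝ᵥ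
      S *ᵥ (Pi.single i a' + Pi.single j b' + Pi.single k c' + Pi.single l d') =
    a * (S i i * a' + S i j * b' + S i k * c' + S i l * d') +
    b * (S j i * a' + S j j * b' + S j k * c' + S j l * d') +
    c * (S k i * a' + S k j * b' + S k k * c' + S k l * d') +
    d * (S l i * a' + S l j * b' + S l k * c' + S l l * d') := by
  simp only [mulVec_add, mulVec_single, dotProduct_add, add_dotProduct, single_dotProduct,
    Pi.add_apply, Pi.smul_apply, col_apply, op_smul_eq_mul]
  ring

theorem myTrans {n : ℕ} (S : Matrix (Fin n) (Fin n) ℝ) (hS : S.IsHermitian)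
    (hdiag : ∀ i, S i i = 0) (hsym : ∀ p q, S p q = S q p)
    (hpos : Nat.card {i : Fin n // 0 < hS.eigenvalues i} ≤ 1)
    (i j k l : Fin n) (hzij : S i j = 0) (hzjk : S j k = 0)
    (hik : S i k ≠ 0) (hjl : S j l ≠ 0) : False := by
  set c := S i k with hc'
  set d := S j l with hd'
  set e := S i l with he'
  set f := S k l with hf'
  set x : Fin n → ℝ :=
    Pi.single i 1 + Pi.single j 0 + Pi.single k (1/c) + Pi.single l 0 with hx'
  have hqx : x ⬝ᵥ S *ᵥ x = 2 := by
    rw [hx', expand4]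
    rw [hsym j i, hsym k i, hsym k j, hsym l i, hsym l j, hsym l k]
    simp only [hdiag, hzij, hzjk, ← hc', ← hd', ← he', ← hf']
    field_simp
    norm_num
    ring
  have hqy : ∀ s : ℝ,
      (Pi.single i (-(s*f/c)) + Pi.single j 1 + Pi.single k (-(s*e/c)) + Pi.single l s) ⬝ᵥ
        S *ᵥ (Pi.single i (-(s*f/c)) + Pi.single j 1 + Pi.single k (-(s*e/c)) + Pi.single l s)
      = 2*s*d - 2*s^2*(e*f)/c := by
    intro s
    rw [expand4]
    rw [hsym j i, hsym k i, hsym k j, hsym l i, hsym l j, hsym l k]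
    simp only [hdiag, hzij, hzjk, ← hc', ← hd', ← he', ← hf']
    field_simp
    ring
  have hB : ∀ s : ℝ, x ⬝ᵥ
      S *ᵥ (Pi.single i (-(s*f/c)) + Pi.single j 1 + Pi.single k (-(s*e/c)) + Pi.single l s)
      = 0 := by
    intro s
    rw [hx', expand4]
    rw [hsym j i, hsym k i, hsym k j, hsym l i, hsym l j, hsym l k]
    simp only [hdiag, hzij, hzjk, ← hc', ← hd', ← he', ← hf']
    field_simp
    ring
  obtain ⟨s, hs⟩ : ∃ s : ℝ, 0 < 2*s*d - 2*s^2*(e*f)/c := by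
    rcases le_or_gt (e*f*c) 0 with hefc | hefc
    · refine ⟨1/d, ?_⟩
      have h1 : 2*(1/d)*d - 2*(1/d)^2*(e*f)/c = 2 - 2*(e*f*c)/(c^2*d^2) := by
        field_simp
      rw [h1]
      have h2 : 2*(e*f*c)/(c^2*d^2) ≤ 0 := by
        apply div_nonpos_of_nonpos_of_nonneg (by linarith) (by positivity)
      linarith
    · have hef : e*f ≠ 0 := by
        intro h0
        rw [show e*f*c = (e*f)*c from rfl, h0] at hefc
        simp at hefc
      refine ⟨c*d/(2*(e*f)), ?_⟩
      have h1 : 2*(c*d/(2*(e*f)))*d - 2*(c*d/(2*(e*f)))^2*(e*f)/c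
          = (e*f*c)*d^2/(2*(e*f)^2) := by
        field_simp
        ring
      rw [h1]
      have hd2 : d^2 > 0 := by positivity
      apply div_pos (by nlinarith) (by positivity)
  exact myTool S hS hpos x _ (by rw [hqx]; norm_num) (by rw [hqy s]; exact hs)
    (by rw [hB s, hqx, hqy s]; simpa using by linarith)

theorem myQuad {n : ℕ} (S : Matrix (Fin n) (Fin n) ℝ) (hS : S.IsHermitian)
    (hdiag : ∀ i, S i i = 0) (hsym : ∀ p q, S p q = S q p)
    (hpos : Nat.card {i : Fin n // 0 < hS.eigenvalues i} ≤ 1)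
    (i j k l : Fin n) (hzij : S i j = 0) (hzkl : S k l = 0) :
    0 ≤ S i k * S i l * S j k * S j l := by
  by_contra hcon
  push_neg at hcon
  set a := S i k with ha'
  set b := S i l with hb'
  set c := S j k with hc'
  set d := S j l with hd'
  have ha : a ≠ 0 := fun h0 => by rw [h0] at hcon; simp at hcon
  have hc : c ≠ 0 := fun h0 => by rw [h0] at hcon; simp at hcon
  have hD : a*d - c*b ≠ 0 := by
    intro h0
    have hcb : c*b = a*d := by linarith
    have h1 : a*b*c*d = (a*d)*(c*b) := by ring
    rw [hcb] at h1
    nlinarith [mul_self_nonneg (a*d)]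
  obtain ⟨p, q, hpq1, hpq2⟩ :
      ∃ p q : ℝ, p*a + q*c = -(b/(2*a) + d/(2*c)) ∧ p*b + q*d = 1 := by
    refine ⟨(-(b/(2*a)+d/(2*c))*d - c)/(a*d - c*b),
      (a + b*(b/(2*a)+d/(2*c)))/(a*d - c*b), ?_, ?_⟩
    · field_simp [show a*d - b*c ≠ 0 by rwa [mul_comm b c]]
      ring
    · field_simp [show a*d - b*c ≠ 0 by rwa [mul_comm b c]]
      ring
  set x : Fin n → ℝ :=
    Pi.single i (1/(2*a)) + Pi.single j (1/(2*c)) + Pi.single k 1 + Pi.single l 0 with hx'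
  set y : Fin n → ℝ :=
    Pi.single i p + Pi.single j q + Pi.single k 0 + Pi.single l 1 with hy'
  have hqx : x ⬝ᵥ S *ᵥ x = 2 := by
    rw [hx', expand4]
    rw [hsym j i, hsym k i, hsym k j, hsym l i, hsym l j, hsym l k]
    simp only [hdiag, hzij, hzkl, ← ha', ← hb', ← hc', ← hd']
    field_simp
    ring
  have hqy : y ⬝ᵥ S *ᵥ y = 2 := by
    rw [hy', expand4]
    rw [hsym j i, hsym k i, hsym k j, hsym l i, hsym l j, hsym l k]
    simp only [hdiag, hzij, hzkl, ← ha', ← hb', ← hc', ← hd']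
    linear_combination (2:ℝ) * hpq2
  have hB : x ⬝ᵥ S *ᵥ y = 0 := by
    rw [hx', hy', expand4]
    rw [hsym j i, hsym k i, hsym k j, hsym l i, hsym l j, hsym l k]
    simp only [hdiag, hzij, hzkl, ← ha', ← hb', ← hc', ← hd']
    linear_combination hpq1
  exact myTool S hS hpos x y (by rw [hqx]; norm_num) (by rw [hqy]; norm_num)
    (by rw [hB, hqx, hqy]; norm_num)

theorem myTriangle {n : ℕ} (S : Matrix (Fin n) (Fin n) ℝ) (hS : S.IsHermitian)
    (hdiag : ∀ i, S i i = 0) (hsym : ∀ p q, S p q = S q p)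
    (hpos : Nat.card {i : Fin n // 0 < hS.eigenvalues i} ≤ 1)
    (i j k : Fin n) :
    0 ≤ S i j * S i k * S j k := by
  by_contra hcon
  push_neg at hcon
  have ha : S i j ≠ 0 := fun h0 => by rw [h0] at hcon; simp at hcon
  set a := S i j with ha'
  set b := S i k with hb'
  set c := S j k with hc'
  set x : Fin n → ℝ :=
    Pi.single i (1/a) + Pi.single j 1 + Pi.single k 0 + Pi.single i 0 with hx'
  set y : Fin n → ℝ :=
    Pi.single i (-(c/a)) + Pi.single j (-(b/a)) + Pi.single k 1 + Pi.single i 0 with hy'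
  have hqx : x ⬝ᵥ S *ᵥ x = 2 := by
    rw [hx', expand4]
    rw [hsym j i, hsym k i, hsym k j]
    simp only [hdiag, ← ha', ← hb', ← hc']
    field_simp
    norm_num
    ring
  have hqy : y ⬝ᵥ S *ᵥ y = -(2*b*c)/a := by
    rw [hy', expand4]
    rw [hsym j i, hsym k i, hsym k j]
    simp only [hdiag, ← ha', ← hb', ← hc']
    field_simp
    ring
  have hB : x ⬝ᵥ S *ᵥ y = 0 := by
    rw [hx', hy', expand4]
    rw [hsym j i, hsym k i, hsym k j]
    simp only [hdiag, ← ha', ← hb', ← hc']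
    field_simp
    ring
  have hqypos : 0 < -(2*b*c)/a := by
    have h1 : -(2*b*c)/a = -(2*(a*b*c))/a^2 := by field_simp
    rw [h1]
    apply div_pos (by linarith) (by positivity)
  exact myTool S hS hpos x y (by rw [hqx]; norm_num) (by rw [hqy]; exact hqypos)
    (by rw [hB, hqx, hqy]; simpa using by positivity)

/-- Let `S` be a real symmetric `n × n` matrix with zero diagonal and at most one positive
eigenvalue, and let `N` be the set of indices whose row in `S` is nonzero. Then:
(a) the relation `i ~ j ↔ (i = j ∨ s_ij = 0)` is an equivalence relation on `N`; and
(b) there is a sign vector `σ : {1,…,n} → {−1,+1}` with `s_ij·σ_i·σ_j > 0` whenever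
`s_ij ≠ 0`. -/
theorem parallel_equivalence_and_signs (n : ℕ) (S : Matrix (Fin n) (Fin n) ℝ)
    (hS : S.IsHermitian) (hdiag : ∀ i, S i i = 0)
    (hpos : Nat.card {i : Fin n // 0 < hS.eigenvalues i} ≤ 1) :
    Equivalence (fun (i j : {i : Fin n // S i ≠ 0}) =>
        (i : Fin n) = (j : Fin n) ∨ S (i : Fin n) (j : Fin n) = 0) ∧
    ∃ σ : Fin n → ℝ, (∀ i, σ i = 1 ∨ σ i = -1) ∧
      ∀ i j : Fin n, S i j ≠ 0 → 0 < S i j * σ i * σ j := by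
  classical
  have hsym : ∀ p q : Fin n, S p q = S q p := by
    intro p q
    have := congrFun (congrFun hS.eq q) p
    simpa using this
  constructor
  · refine ⟨fun x => Or.inl rfl, ?_, ?_⟩
    · intro x y h
      rcases h with h | h
      · exact Or.inl h.symm
      · exact Or.inr (by rw [hsym]; exact h)
    · intro x y z hxy hyz
      rcases hxy with h | h
      · rw [h]; exact hyz
      rcases hyz with h2 | h2
      · rw [← h2]; exact Or.inr h
      by_cases hxz : (x : Fin n) = (z : Fin n)
      · exact Or.inl hxz
      right
      by_contra hne
      obtain ⟨l, hl⟩ := Function.ne_iff.mp y.2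
      exact myTrans S hS hdiag hsym hpos x y z l h h2 hne (by simpa using hl)
  · by_cases hall : ∃ p q : Fin n, S p q ≠ 0
    · obtain ⟨i0, j0, h00⟩ := hall
      refine ⟨fun t => if S i0 t = 0 then auxSgn (S t j0) * auxSgn (S i0 j0)
          else auxSgn (S i0 t), ?_, ?_⟩
      · intro t
        dsimp only
        split_ifs with h
        · rcases auxSgn_or (S t j0) with h1 | h1 <;> rcases auxSgn_or (S i0 j0) with h2 | h2 <;>
            rw [h1, h2] <;> norm_num
        · exact auxSgn_or _
      · have key : ∀ a b : Fin n, S a b ≠ 0 → S i0 a = 0 → S i0 b ≠ 0 →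
            0 < S a b * (auxSgn (S a j0) * auxSgn (S i0 j0)) * auxSgn (S i0 b) := by
          intro a b hab h1 h2
          by_cases hai0 : a = i0
          · subst hai0
            rw [auxSgn_sq, mul_one]
            exact auxSgn_pos hab
          · have hij00 : S i0 j0 ≠ 0 := h00
            have haj0 : S a j0 ≠ 0 := by
              intro h0
              exact myTrans S hS hdiag hsym hpos i0 a j0 b h1 h0 hij00 hab
            by_cases hbj0 : b = j0
            · subst hbj0
              have e : S a b * (auxSgn (S a b) * auxSgn (S i0 b)) * auxSgn (S i0 b)
                  = (S a b * auxSgn (S a b)) * (auxSgn (S i0 b) * auxSgn (S i0 b)) := by ring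
              rw [e, auxSgn_sq, mul_one]
              exact auxSgn_pos hab
            · have hgoal : 0 < S a b * S a j0 * S i0 j0 * S i0 b := by
                by_cases hbb : S b j0 = 0
                · have hq := myQuad S hS hdiag hsym hpos a i0 b j0
                    (by rw [hsym]; exact h1) hbb
                  have hne : S a b * S a j0 * S i0 b * S i0 j0 ≠ 0 :=
                    mul_ne_zero (mul_ne_zero (mul_ne_zero hab haj0) h2) hij00
                  have hst := lt_of_le_of_ne hq (Ne.symm hne)
                  nlinarith [hst]
                · have hT1 := myTriangle S hS hdiag hsym hpos a b j0
                  have hT2 := myTriangle S hS hdiag hsym hpos i0 b j0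
                  have hs1 : 0 < S a b * S a j0 * S b j0 :=
                    lt_of_le_of_ne hT1 (Ne.symm (mul_ne_zero (mul_ne_zero hab haj0) hbb))
                  have hs2 : 0 < S i0 b * S i0 j0 * S b j0 :=
                    lt_of_le_of_ne hT2 (Ne.symm (mul_ne_zero (mul_ne_zero h2 hij00) hbb))
                  nlinarith [mul_pos hs1 hs2, mul_self_pos.mpr hbb]
              exact auxHelper3 _ _ _ _ hgoal
        intro u v huv
        dsimp only
        by_cases h1 : S i0 u = 0 <;> by_cases h2 : S i0 v = 0
        · exact absurd (myTrans S hS hdiag hsym hpos u i0 v j0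
            (by rw [hsym]; exact h1) h2 huv h00) not_false
        · rw [if_pos h1, if_neg h2]
          exact key u v huv h1 h2
        · rw [if_neg h1, if_pos h2]
          have hkey := key v u (by rw [hsym]; exact huv) h2 h1
          rw [hsym u v]
          nlinarith [hkey]
        · rw [if_neg h1, if_neg h2]
          have hT := myTriangle S hS hdiag hsym hpos i0 u v
          have hst : 0 < S i0 u * S i0 v * S u v :=
            lt_of_le_of_ne hT (Ne.symm (mul_ne_zero (mul_ne_zero h1 h2) huv))
          exact auxHelper2 (S u v) (S i0 u) (S i0 v) (by nlinarith [hst])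
    · push_neg at hall
      exact ⟨fun _ => 1, fun _ => Or.inl rfl, fun i j hij => absurd (hall i j) hij⟩
end

section
/- For all real numbers p12, p13, p14, p23, p24, p34, the determinant of the symmetric 4×4 matrix with zero diagonal whose off-diagonal entries are s_ij = p_ij² (for 1 ≤ i < j ≤ 4) equals the product (p12·p34 + p13·p24 + p14·p23)·(−p12·p34 − p13·p24 + p14·p23)·(−p12·p34 + p13·p24 − p14·p23)·(p12·p34 − p13·p24 − p14·p23). -/
open Matrix

/-- Factorization of the determinant of a symmetric `4 × 4` matrix with zero diagonal
whose off-diagonal entries are the squares `p_ij²` (the squared Plücker quadric /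
Schouten identity). -/
theorem det_factorization (p12 p13 p14 p23 p24 p34 : ℝ) :
    (!![0, p12 ^ 2, p13 ^ 2, p14 ^ 2;
        p12 ^ 2, 0, p23 ^ 2, p24 ^ 2;
        p13 ^ 2, p23 ^ 2, 0, p34 ^ 2;
        p14 ^ 2, p24 ^ 2, p34 ^ 2, 0] : Matrix (Fin 4) (Fin 4) ℝ).det =
      (p12 * p34 + p13 * p24 + p14 * p23) *
      (-(p12 * p34) - p13 * p24 + p14 * p23) *
      (-(p12 * p34) + p13 * p24 - p14 * p23) *
      (p12 * p34 - p13 * p24 - p14 * p23) := by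
  simp [Matrix.det_succ_row_zero, Fin.sum_univ_succ, Fin.succAbove,
    show (Fin.castSucc 2 : Fin 4) = 2 from rfl]
  ring
end

section
/- Let S be a real symmetric 4×4 matrix with all diagonal entries equal to zero and all off-diagonal entries strictly positive. Then S has exactly one positive eigenvalue and three negative eigenvalues (counted with algebraic multiplicity) if and only if det(S) < 0. -/
open Matrix Finset

private lemma prod_neg_aux {ι : Type*} (s : Finset ι) (f : ι → ℝ) :
    ∏ i ∈ s, (-f i) = (-1) ^ s.card * ∏ i ∈ s, f i := by
  rw [← Finset.prod_const, ← Finset.prod_mul_distrib]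
  simp

/-- Let `S` be a real symmetric `4 × 4` matrix with zero diagonal and strictly positive
off-diagonal entries. Then `S` has exactly one positive and three negative eigenvalues
(with algebraic multiplicity) if and only if `det S < 0`. -/
theorem signature_iff_det_neg (S : Matrix (Fin 4) (Fin 4) ℝ) (hS : S.IsHermitian)
    (hdiag : ∀ i, S i i = 0) (hoff : ∀ i j : Fin 4, i ≠ j → 0 < S i j) :
    (Nat.card {i : Fin 4 // 0 < hS.eigenvalues i} = 1 ∧
     Nat.card {i : Fin 4 // hS.eigenvalues i < 0} = 3) ↔ S.det < 0 := by
  classical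
  set μ := hS.eigenvalues with hμdef
  set U : Matrix (Fin 4) (Fin 4) ℝ := (hS.eigenvectorUnitary : Matrix (Fin 4) (Fin 4) ℝ)
    with hUdef
  have hspec : S = U * Matrix.diagonal μ * star U := by
    have h := hS.spectral_theorem
    simpa [RCLike.ofReal_real_eq_id] using h
  have hU1 : star U * U = 1 := by
    rw [hUdef, ← Unitary.coe_star]; exact Unitary.coe_star_mul_self _
  have hU2 : U * star U = 1 := by
    rw [hUdef, ← Unitary.coe_star]; exact Unitary.coe_mul_star_self _
  have hsU : star U = Uᵀ := by
    rw [Matrix.star_eq_conjTranspose, Matrix.conjTranspose_eq_transpose_of_trivial]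
  have hdet : S.det = ∏ i, μ i := by simpa [RCLike.ofReal_real_eq_id] using
    hS.det_eq_prod_eigenvalues
  have htrace : ∑ i, μ i = 0 := by
    have h1 : S.trace = 0 := by simp [Matrix.trace, Matrix.diag, hdiag]
    have h2 : S.trace = ∑ i, μ i := by
      conv_lhs => rw [hspec]
      rw [Matrix.trace_mul_comm, ← Matrix.mul_assoc, hU1, Matrix.one_mul, Matrix.trace_diagonal]
    rw [← h2, h1]
  set P : Finset (Fin 4) := univ.filter (fun i => 0 < μ i) with hPdef
  set N : Finset (Fin 4) := univ.filter (fun i => μ i < 0) with hNdef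
  have e1 : Nat.card {i : Fin 4 // 0 < μ i} = P.card := by
    rw [Nat.card_eq_fintype_card, Fintype.card_subtype]
  have e2 : Nat.card {i : Fin 4 // μ i < 0} = N.card := by
    rw [Nat.card_eq_fintype_card, Fintype.card_subtype]
  have hdisj : Disjoint P N := by
    rw [Finset.disjoint_left]
    intro i hiP hiN
    rw [hPdef, Finset.mem_filter] at hiP
    rw [hNdef, Finset.mem_filter] at hiN
    linarith [hiP.2, hiN.2]
  have hPpos : 0 < ∏ i ∈ P, μ i :=
    Finset.prod_pos (fun i hi => (Finset.mem_filter.mp hi).2)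
  have hNprodneg : ∀ m : ℕ, N.card = 2 * m + 1 → ∏ i ∈ N, μ i < 0 := by
    intro m hm
    have h1 : ∏ i ∈ N, μ i = (-1) ^ N.card * ∏ i ∈ N, (-μ i) := by
      have h0 := prod_neg_aux N (fun i => -μ i)
      simp only [neg_neg] at h0
      exact h0
    have h2 : 0 < ∏ i ∈ N, (-μ i) :=
      Finset.prod_pos (fun i hi => by
        have := (Finset.mem_filter.mp hi).2; linarith)
    rw [h1, hm]
    have : ((-1 : ℝ)) ^ (2 * m + 1) = -1 := by
      rw [pow_succ, pow_mul]; simp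
    rw [this]
    nlinarith
  rw [e1, e2, hdet]
  constructor
  · rintro ⟨h1, h2⟩
    have hunion : P ∪ N = univ := by
      apply Finset.eq_univ_of_card
      rw [Finset.card_union_of_disjoint hdisj, h1, h2]
      simp
    have hsplit : ∏ i, μ i = (∏ i ∈ P, μ i) * ∏ i ∈ N, μ i := by
      rw [← Finset.prod_union hdisj, hunion]
    rw [hsplit]
    exact mul_neg_of_pos_of_neg hPpos (hNprodneg 1 h2)
  · intro hdetneg
    have hnz : ∀ i, μ i ≠ 0 := by
      intro i h
      rw [Finset.prod_eq_zero (Finset.mem_univ i) h] at hdetneg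
      exact lt_irrefl _ hdetneg
    have hunion : P ∪ N = univ := by
      apply Finset.eq_univ_of_forall
      intro i
      rcases (hnz i).lt_or_gt with h | h
      · exact Finset.mem_union_right _ (Finset.mem_filter.mpr ⟨Finset.mem_univ i, h⟩)
      · exact Finset.mem_union_left _ (Finset.mem_filter.mpr ⟨Finset.mem_univ i, h⟩)
    have hcards : P.card + N.card = 4 := by
      rw [← Finset.card_union_of_disjoint hdisj, hunion]
      simp
    have hsplit : ∏ i, μ i = (∏ i ∈ P, μ i) * ∏ i ∈ N, μ i := by
      rw [← Finset.prod_union hdisj, hunion]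
    have hNneg : ∏ i ∈ N, μ i < 0 := by
      rw [hsplit] at hdetneg
      nlinarith
    have hNodd : Odd N.card := by
      by_contra heven
      rw [Nat.not_odd_iff_even] at heven
      have h1 : ∏ i ∈ N, μ i = (-1) ^ N.card * ∏ i ∈ N, (-μ i) := by
        have h0 := prod_neg_aux N (fun i => -μ i)
        simp only [neg_neg] at h0
        exact h0
      have h2 : 0 < ∏ i ∈ N, (-μ i) :=
        Finset.prod_pos (fun i hi => by
          have := (Finset.mem_filter.mp hi).2; linarith)
      rw [h1, heven.neg_one_pow, one_mul] at hNneg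
      linarith
    have hN13 : N.card = 1 ∨ N.card = 3 := by
      obtain ⟨m, hm⟩ := hNodd
      omega
    rcases hN13 with h1 | h3
    · -- impossible case: one negative, three positive eigenvalues
      exfalso
      obtain ⟨k, hk⟩ := Finset.card_eq_one.mp h1
      have hμk : μ k < 0 := by
        have hkN : k ∈ N := hk ▸ Finset.mem_singleton_self k
        exact (Finset.mem_filter.mp hkN).2
      have hpos : ∀ j, j ≠ k → 0 < μ j := by
        intro j hj
        rcases (hnz j).lt_or_gt with h | h
        · exfalso
          have : j ∈ N := Finset.mem_filter.mpr ⟨Finset.mem_univ j, h⟩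
          rw [hk, Finset.mem_singleton] at this
          exact hj this
        · exact h
      have hsumk : -μ k = ∑ j ∈ univ.erase k, μ j := by
        have h := htrace
        rw [← Finset.add_sum_erase _ _ (Finset.mem_univ k)] at h
        linarith
      have hlt : ∀ i, μ i < -μ k := by
        intro i
        by_cases hik : i = k
        · subst hik; linarith
        · have hmem : i ∈ univ.erase k := Finset.mem_erase.mpr ⟨hik, Finset.mem_univ i⟩
          rw [hsumk, ← Finset.add_sum_erase _ _ hmem]
          have hcard2 : ((univ.erase k).erase i).card = 2 := by
            rw [Finset.card_erase_of_mem hmem, Finset.card_erase_of_mem (Finset.mem_univ k)]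
            simp
          have hne : ((univ.erase k).erase i).Nonempty := by
            rw [← Finset.card_pos, hcard2]; norm_num
          have hpos' : 0 < ∑ j ∈ (univ.erase k).erase i, μ j := by
            apply Finset.sum_pos _ hne
            intro j hj
            exact hpos j (Finset.mem_erase.mp (Finset.mem_of_mem_erase hj)).1
          linarith
      -- quadratic form identities
      have quad : ∀ x : Fin 4 → ℝ,
          x ⬝ᵥ (S *ᵥ x) = ∑ i, μ i * ((star U *ᵥ x) i) ^ 2 := by
        intro x
        conv_lhs => rw [hspec]
        rw [← Matrix.mulVec_mulVec, ← Matrix.mulVec_mulVec, Matrix.dotProduct_mulVec x U]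
        have hx : x ᵥ* U = star U *ᵥ x := by
          rw [hsU, Matrix.mulVec_transpose]
        rw [hx]
        simp only [dotProduct, Matrix.mulVec_diagonal]
        exact Finset.sum_congr rfl (fun i _ => by ring)
      have normeq : ∀ x : Fin 4 → ℝ,
          (star U *ᵥ x) ⬝ᵥ (star U *ᵥ x) = x ⬝ᵥ x := by
        intro x
        have hU2' : U * Uᵀ = 1 := by rw [← hsU]; exact hU2
        rw [Matrix.dotProduct_mulVec, Matrix.vecMul_mulVec, hsU, Matrix.transpose_transpose,
          hU2', Matrix.vecMul_one]
      set v : Fin 4 → ℝ := ⇑(hS.eigenvectorBasis k) with hv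
      have hSv : S *ᵥ v = μ k • v := hS.mulVec_eigenvectorBasis k
      have hvne : v ≠ 0 := by
        intro h
        apply hS.eigenvectorBasis.orthonormal.ne_zero k
        ext i
        exact congrFun h i
      set w : Fin 4 → ℝ := fun i => |v i| with hw
      have hSnn : ∀ i j, 0 ≤ S i j := by
        intro i j
        by_cases hij : i = j
        · subst hij; rw [hdiag]
        · exact le_of_lt (hoff i j hij)
      have hlow : ∀ i, (-μ k) * w i ≤ (S *ᵥ w) i := by
        intro i
        have h1 : |(S *ᵥ v) i| ≤ (S *ᵥ w) i := by
          have e : (S *ᵥ w) i = ∑ j, S i j * |v j| := by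
            simp [Matrix.mulVec, dotProduct, hw]
          rw [e]
          calc |(S *ᵥ v) i| = |∑ j, S i j * v j| := by
                simp [Matrix.mulVec, dotProduct]
            _ ≤ ∑ j, |S i j * v j| := Finset.abs_sum_le_sum_abs _ _
            _ = ∑ j, S i j * |v j| := by
                refine Finset.sum_congr rfl (fun j _ => ?_)
                rw [abs_mul, abs_of_nonneg (hSnn i j)]
        have h2 : |(S *ᵥ v) i| = (-μ k) * w i := by
          rw [hSv]
          simp only [Pi.smul_apply, smul_eq_mul, hw, abs_mul, abs_of_neg hμk]
        linarith
      have hww : 0 < w ⬝ᵥ w := by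
        obtain ⟨i0, hi0⟩ := Function.ne_iff.mp hvne
        apply Finset.sum_pos'
        · intro i _
          exact mul_self_nonneg _
        · exact ⟨i0, Finset.mem_univ i0, by
            have : (0:ℝ) < |v i0| := abs_pos.mpr hi0
            exact mul_pos this this⟩
      have hlower : (-μ k) * (w ⬝ᵥ w) ≤ w ⬝ᵥ (S *ᵥ w) := by
        unfold dotProduct
        rw [Finset.mul_sum]
        apply Finset.sum_le_sum
        intro i _
        calc (-μ k) * (w i * w i) = w i * ((-μ k) * w i) := by ring
          _ ≤ w i * (S *ᵥ w) i :=
            mul_le_mul_of_nonneg_left (hlow i) (abs_nonneg _)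
      set y : Fin 4 → ℝ := star U *ᵥ w with hy
      have hyy : y ⬝ᵥ y = w ⬝ᵥ w := normeq w
      have hyne : ∃ i, y i ≠ 0 := by
        by_contra h
        push_neg at h
        have hy0 : y ⬝ᵥ y = 0 := by simp [dotProduct, h]
        rw [hyy] at hy0
        linarith
      obtain ⟨i0, hi0⟩ := hyne
      have hupper : w ⬝ᵥ (S *ᵥ w) < (-μ k) * (w ⬝ᵥ w) := by
        rw [quad w, ← hy, ← hyy]
        have hyysum : y ⬝ᵥ y = ∑ i, y i ^ 2 := by
          simp [dotProduct, sq]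
        rw [hyysum, Finset.mul_sum]
        apply Finset.sum_lt_sum
        · intro i _
          exact mul_le_mul_of_nonneg_right (le_of_lt (hlt i)) (sq_nonneg _)
        · exact ⟨i0, Finset.mem_univ i0,
            mul_lt_mul_of_pos_right (hlt i0) (by positivity)⟩
      linarith
    · refine ⟨by omega, h3⟩
end

section
/- For real numbers x and y, let S(x,y) be the real symmetric 4×4 matrix with zero diagonal and entries s12 = s34 = x, s14 = s23 = y, and s13 = s24 = −x−y (that is, the matrix with rows (0, x, −x−y, y), (x, 0, y, −x−y), (−x−y, y, 0, x), (y, −x−y, x, 0)). Then: (a) every 3×3 principal minor of S(x,y) equals −2xy(x+y); (b) all row sums of S(x,y) are zero; and (c) S(x,y) has at most one positive eigenvalue if and only if xy(x+y) ≤ 0. -/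
open Matrix

open Polynomial

/-- The matrix `S(x,y)` parametrizing the MMC region for `n = 4` massless particles. -/
def mmcMatrix (x y : ℝ) : Matrix (Fin 4) (Fin 4) ℝ :=
  !![0, x, -x - y, y;
     x, 0, y, -x - y;
     -x - y, y, 0, x;
     y, -x - y, x, 0]

/-- The characteristic polynomial of a real symmetric matrix is the product of
`X - C λᵢ` over its eigenvalues. -/
lemma charpoly_eq_prod_eigenvalues {n : Type*} [Fintype n] [DecidableEq n] {A : Matrix n n ℝ}
    (hA : A.IsHermitian) :
    A.charpoly = ∏ i, (X - C (hA.eigenvalues i)) := by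
  set U : Matrix n n ℝ := (hA.eigenvectorUnitary : Matrix n n ℝ) with hUdef
  have hU : U * star U = 1 := Matrix.mem_unitaryGroup_iff.mp hA.eigenvectorUnitary.2
  have hU' : star U * U = 1 := Matrix.mem_unitaryGroup_iff'.mp hA.eigenvectorUnitary.2
  have hAe : A = U * diagonal hA.eigenvalues * star U := hA.spectral_theorem
  set f : Matrix n n ℝ →+* Matrix n n ℝ[X] := (C : ℝ →+* ℝ[X]).mapMatrix with hf
  have hfU : f U * f (star U) = 1 := by rw [← _root_.map_mul, hU, _root_.map_one]
  have hfU' : f (star U) * f U = 1 := by rw [← _root_.map_mul, hU', _root_.map_one]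
  have hcomm : f U * scalar n X * f (star U) = scalar n X := by
    rw [(scalar_commute (X : ℝ[X]) (fun r => Commute.all _ _) (f U)).symm.eq, mul_assoc, hfU,
      mul_one]
  have hcm : charmatrix A = f U * charmatrix (diagonal hA.eigenvalues) * f (star U) := by
    rw [charmatrix, charmatrix, mul_sub, sub_mul, hcomm]
    show _ = _ - f U * f (diagonal hA.eigenvalues) * f (star U)
    rw [← _root_.map_mul, ← _root_.map_mul, ← hAe]
  have hdet : A.charpoly = (charmatrix (diagonal hA.eigenvalues)).det := by
    rw [Matrix.charpoly, hcm, det_mul, det_mul, mul_comm, ← mul_assoc, ← det_mul, hfU',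
      det_one, one_mul]
  rw [hdet]
  have h2 : charmatrix (diagonal hA.eigenvalues) =
      diagonal (fun i => X - C (hA.eigenvalues i)) := by
    ext i j
    by_cases h : i = j
    · subst h; simp
    · simp [charmatrix_apply_ne _ _ _ h, diagonal_apply_ne _ h]
  rw [h2, det_diagonal]

/-- Explicit factorization of the characteristic polynomial of `mmcMatrix`. -/
lemma charpoly_mmcMatrix (x y : ℝ) : (mmcMatrix x y).charpoly =
    (Multiset.map (fun a => X - C a)
      ((0:ℝ) ::ₘ (2*x) ::ₘ (2*y) ::ₘ {(-2)*(x+y)})).prod := by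
  have h : charmatrix (mmcMatrix x y) =
      !![X, -C x, C x + C y, -C y;
         -C x, X, -C y, C x + C y;
         C x + C y, -C y, X, -C x;
         -C y, C x + C y, -C x, X] := by
    ext i j
    fin_cases i <;> fin_cases j <;>
      simp [charmatrix_apply, mmcMatrix, diagonal, map_neg, map_sub, map_add] <;> ring
  rw [Matrix.charpoly, h]
  have hC2 : C (2:ℝ) = 2 := map_ofNat C 2
  have e1 : C ((2:ℝ)*x) = 2 * C x := by rw [C_mul, hC2]
  have e2 : C ((2:ℝ)*y) = 2 * C y := by rw [C_mul, hC2]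
  have e3 : C ((-2:ℝ)*(x+y)) = -2 * (C x + C y) := by
    rw [C_mul, C_add, show ((-2:ℝ)) = -(2:ℝ) by norm_num, map_neg, hC2]
  simp only [Multiset.insert_eq_cons, Multiset.map_cons, Multiset.map_singleton,
    Multiset.prod_cons, Multiset.prod_singleton, e1, e2, e3, C_0]
  simp [det_succ_row_zero, Fin.sum_univ_succ, Fin.succAbove, det_fin_three,
    show ((1:Fin 4) < Fin.succ 2) from by decide,
    show ((2:Fin 4) < Fin.succ 2) from by decide,
    show ((Fin.succ 2 : Fin 4)) = 3 from rfl,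
    show ((Fin.castSucc 2 : Fin 4)) = 2 from rfl]
  ring

/-- The multiset of eigenvalues of `mmcMatrix x y` is `{0, 2x, 2y, -2(x+y)}`. -/
lemma eig_multiset (x y : ℝ) (hS : (mmcMatrix x y).IsHermitian) :
    Multiset.map hS.eigenvalues Finset.univ.val =
      ((0:ℝ) ::ₘ (2*x) ::ₘ (2*y) ::ₘ {(-2)*(x+y)}) := by
  have h1 := charpoly_eq_prod_eigenvalues hS
  have h2 := charpoly_mmcMatrix x y
  have key : (Multiset.map (fun a => X - C a) (Multiset.map hS.eigenvalues Finset.univ.val)).prod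
      = (Multiset.map (fun a => X - C a)
          ((0:ℝ) ::ₘ (2*x) ::ₘ (2*y) ::ₘ {(-2)*(x+y)})).prod := by
    rw [Multiset.map_map, ← h2, h1]
    rfl
  have := congrArg Polynomial.roots key
  rwa [Polynomial.roots_multiset_prod_X_sub_C, Polynomial.roots_multiset_prod_X_sub_C] at this

/-- Reduction of a determinant over a 3-element subtype index to a `Fin 3` determinant. -/
lemma det_subtype_eq (A : Matrix (Fin 4) (Fin 4) ℝ) (I : Finset (Fin 4)) (hI : I.card = 3)
    (f : Fin 3 → Fin 4) (hf : ∀ i, f i ∈ I) (hinj : Function.Injective f) :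
    (A.submatrix (fun i : I => (i : Fin 4)) (fun j : I => (j : Fin 4))).det =
      (A.submatrix f f).det := by
  have hbij : Function.Bijective (fun i : Fin 3 => (⟨f i, hf i⟩ : ↥I)) := by
    rw [Fintype.bijective_iff_injective_and_card]
    constructor
    · intro a b hab
      exact hinj (congrArg Subtype.val hab)
    · simp [Fintype.card_coe, hI]
  let e := Equiv.ofBijective _ hbij
  rw [← Matrix.det_submatrix_equiv_self e, Matrix.submatrix_submatrix]
  rfl

/-- Pure arithmetic form of the positive-eigenvalue count condition. -/
lemma count_pos_iff (x y : ℝ) :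
    (((0 + if 0 < (-2)*(x+y) then 1 else 0) + if 0 < 2*y then 1 else 0) +
      if 0 < 2*x then 1 else 0) + (if 0 < (0:ℝ) then 1 else 0) ≤ 1 ↔ x*y*(x+y) ≤ 0 := by
  have h0 : ¬ (0 < (0:ℝ)) := lt_irrefl 0
  by_cases hx : 0 < 2*x <;> by_cases hy : 0 < 2*y <;> by_cases hz : 0 < (-2)*(x+y) <;>
      simp only [hx, hy, hz, h0, if_true, if_false] <;> norm_num
  · linarith
  · nlinarith [mul_pos (show (0:ℝ)<x by linarith) (show (0:ℝ)<y by linarith),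
      show (0:ℝ) < x+y by linarith]
  · have hy' : y < 0 := by by_contra h; push_neg at h; linarith
    nlinarith [mul_neg_of_pos_of_neg (show (0:ℝ)<x by linarith) hy', show x+y<0 by linarith]
  · nlinarith [mul_nonneg (show (0:ℝ) ≤ x by linarith) (show (0:ℝ) ≤ -y by linarith),
      show (0:ℝ) ≤ x+y by linarith]
  · have hx' : x < 0 := by by_contra h; push_neg at h; linarith
    nlinarith [mul_neg_of_neg_of_pos hx' (show (0:ℝ)<y by linarith), show x+y<0 by linarith]
  · nlinarith [mul_nonneg (show (0:ℝ) ≤ -x by linarith) (show (0:ℝ) ≤ y by linarith),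
      show (0:ℝ) ≤ x+y by linarith]
  · nlinarith [mul_nonneg (show (0:ℝ) ≤ -x by linarith) (show (0:ℝ) ≤ -y by linarith),
      show x+y ≤ 0 by linarith]
  · have h : x + y = 0 := le_antisymm (by linarith) (by linarith)
    rw [h, mul_zero]

/-- For the matrix `S(x,y)`: (a) every `3 × 3` principal minor equals `-2xy(x+y)`;
(b) all row sums vanish; (c) `S(x,y)` has at most one positive eigenvalue if and only if
`xy(x+y) ≤ 0`. -/
theorem mmcMatrix_properties (x y : ℝ) (hS : (mmcMatrix x y).IsHermitian) :
    (∀ I : Finset (Fin 4), I.card = 3 →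
      ((mmcMatrix x y).submatrix (fun i : I => (i : Fin 4)) (fun j : I => (j : Fin 4))).det =
        -2 * x * y * (x + y)) ∧
    (∀ i, ∑ j, mmcMatrix x y i j = 0) ∧
    (Nat.card {i : Fin 4 // 0 < hS.eigenvalues i} ≤ 1 ↔ x * y * (x + y) ≤ 0) := by
  refine ⟨?_, ?_, ?_⟩
  · intro I hI
    have h4 : Iᶜ.card = 1 := by
      have := Finset.card_compl I
      rw [hI] at this
      simp at this; omega
    obtain ⟨k, hk⟩ := Finset.card_eq_one.mp h4
    have hI' : I = {k}ᶜ := by rw [← hk, compl_compl]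
    subst hI'
    fin_cases k
    · rw [det_subtype_eq _ _ hI ![1,2,3] (by decide) (by decide)]
      rw [Matrix.det_fin_three]; simp [mmcMatrix]; ring
    · rw [det_subtype_eq _ _ hI ![0,2,3] (by decide) (by decide)]
      rw [Matrix.det_fin_three]; simp [mmcMatrix]; ring
    · rw [det_subtype_eq _ _ hI ![0,1,3] (by decide) (by decide)]
      rw [Matrix.det_fin_three]; simp [mmcMatrix]; ring
    · rw [det_subtype_eq _ _ hI ![0,1,2] (by decide) (by decide)]
      rw [Matrix.det_fin_three]; simp [mmcMatrix]; ring
  · intro i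
    fin_cases i <;> simp [mmcMatrix, Fin.sum_univ_four] <;> ring
  · have hms := eig_multiset x y hS
    have hcount : Nat.card {i : Fin 4 // 0 < hS.eigenvalues i} =
        Multiset.countP (fun a => 0 < a) (Multiset.map hS.eigenvalues Finset.univ.val) := by
      rw [Nat.card_eq_fintype_card, Fintype.card_subtype]
      rw [Multiset.countP_map]
      rfl
    rw [hcount, hms,
      show ({(-2)*(x+y)} : Multiset ℝ) = ((-2)*(x+y)) ::ₘ 0 from rfl]
    simp only [Multiset.countP_cons, Multiset.countP_zero]
    exact count_pos_iff x y
end
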